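/- arXiv:1310.3153 — 10 statements merged into one kernel-verified Lean document; each statement's English description precedes it below -/
import Mathlib

section
/- Consider n agents with bids b_i : 2^M → ℝ≥0 that are XOS and monotone, and let (X_1,...,X_n) be a partition of M maximizing Σ_i b_i(X_i). Define agent i's VCG payment for a bundle S as p_i(S) = b_{-i}(M) - b_{-i}(M \ S), where b_{-i}(T) = max over partitions (Z_k)_{k≠i} of T of Σ_{k≠i} b_k(Z_k). Then for every partition (Q_1,...,Q_n) of M: Σ_{i=1}^n [p_i(Q_i) - p_i(X_i)] ≤ Σ_{i=1}^n b_i(X_i). -/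
/-- An XOS set function: a pointwise maximum of finitely many nonnegative additive
set functions. -/
def IsXOS {ι : Type*} (b : Finset ι → ℝ) : Prop :=
  ∃ (A : Finset (ι → ℝ)) (hA : A.Nonempty),
    (∀ a ∈ A, ∀ j, 0 ≤ a j) ∧
    ∀ S : Finset ι, b S = A.sup' hA (fun a => ∑ j ∈ S, a j)

/-- The bundle of agent `i` in the allocation encoded by the assignment `g`. -/
def part {n : ℕ} {ι : Type*} [Fintype ι] [DecidableEq ι]
    (g : ι → Fin n) (i : Fin n) : Finset ι :=
  Finset.univ.filter (fun j => g j = i)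

/-- `b_{-i}(T)`: the maximum total bid value achievable by allocating the items of
`T` among the agents other than `i`. -/
noncomputable def othersWelfare {n : ℕ} {ι : Type*} [Fintype ι] [DecidableEq ι]
    (b : Fin n → Finset ι → ℝ) (i : Fin n) (T : Finset ι) : ℝ :=
  (Finset.univ : Finset (ι → Fin n)).sup'
    (Finset.univ_nonempty_iff.mpr ⟨fun _ => i⟩)
    (fun g => ∑ k ∈ Finset.univ.erase i, b k (T.filter (fun j => g j = k)))

/-- The VCG payment of agent `i` for bundle `S` given the bids `b` of all agents
(only the bids of agents other than `i` matter). -/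
noncomputable def vcgPrice {n : ℕ} {ι : Type*} [Fintype ι] [DecidableEq ι]
    (b : Fin n → Finset ι → ℝ) (i : Fin n) (S : Finset ι) : ℝ :=
  othersWelfare b i Finset.univ - othersWelfare b i (Finset.univ \ S)

/-- For XOS, monotone, normalized, nonnegative bids and a
bid-maximizing allocation `(X_1,…,X_n)` (encoded by `x`), for every partition
`(Q_1,…,Q_n)` (encoded by `q`):
`Σ_i [p_i(Q_i) - p_i(X_i)] ≤ Σ_i b_i(X_i)`. -/
theorem vcg_price_difference_bound {n : ℕ} {ι : Type*} [Fintype ι] [DecidableEq ι]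
    (hn : 2 ≤ n) (b : Fin n → Finset ι → ℝ)
    (hXOS : ∀ i, IsXOS (b i))
    (hmono : ∀ i, ∀ S T : Finset ι, S ⊆ T → b i S ≤ b i T)
    (hnorm : ∀ i, b i ∅ = 0)
    (hnn : ∀ i S, 0 ≤ b i S)
    (x : ι → Fin n)
    (hx : ∀ g : ι → Fin n, ∑ i, b i (part g i) ≤ ∑ i, b i (part x i))
    (q : ι → Fin n) :
    ∑ i, (vcgPrice b i (part q i) - vcgPrice b i (part x i)) ≤
      ∑ i, b i (part x i) := by
  classical
  -- Step A: upper bound on othersWelfare of M \ X_i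
  have hA : ∀ i : Fin n, othersWelfare b i (Finset.univ \ part x i)
      ≤ ∑ k ∈ Finset.univ.erase i, b k (part x k) := by
    intro i
    apply Finset.sup'_le
    intro g _
    set g' : ι → Fin n := fun j => if x j = i then i else g j with hg'
    have hsub : part x i ⊆ part g' i := by
      intro j hj
      simp only [part, Finset.mem_filter, Finset.mem_univ, true_and] at hj ⊢
      simp [g', hj]
    have hfil : ∀ k : Fin n, k ≠ i →
        (Finset.univ \ part x i).filter (fun j => g j = k) = part g' k := by
      intro k hk
      ext j
      simp only [part, Finset.mem_filter, Finset.mem_sdiff, Finset.mem_univ, true_and]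
      by_cases h : x j = i <;> simp [g', h, Ne.symm hk]
    have h1 := hx g'
    have h2 : ∑ k ∈ Finset.univ.erase i, b k (part g' k) + b i (part g' i)
        = ∑ k, b k (part g' k) := Finset.sum_erase_add _ _ (Finset.mem_univ i)
    have h3 : ∑ k ∈ Finset.univ.erase i, b k (part x k) + b i (part x i)
        = ∑ k, b k (part x k) := Finset.sum_erase_add _ _ (Finset.mem_univ i)
    have h4 : b i (part x i) ≤ b i (part g' i) := hmono i _ _ hsub
    have h5 : ∑ k ∈ Finset.univ.erase i,
          b k ((Finset.univ \ part x i).filter (fun j => g j = k))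
        = ∑ k ∈ Finset.univ.erase i, b k (part g' k) := by
      refine Finset.sum_congr rfl fun k hk => ?_
      rw [hfil k (Finset.ne_of_mem_erase hk)]
    linarith
  -- Step B: lower bound on othersWelfare of M \ Q_i
  have hB : ∀ i : Fin n, ∑ k ∈ Finset.univ.erase i, b k (part x k \ part q i)
      ≤ othersWelfare b i (Finset.univ \ part q i) := by
    intro i
    have hle := Finset.le_sup' (fun g : ι → Fin n => ∑ k ∈ Finset.univ.erase i,
        b k ((Finset.univ \ part q i).filter (fun j => g j = k))) (Finset.mem_univ x)
    refine le_trans (le_of_eq ?_) hle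
    refine Finset.sum_congr rfl fun k hk => ?_
    congr 1
    ext j
    simp only [part, Finset.mem_filter, Finset.mem_sdiff, Finset.mem_univ, true_and]
    tauto
  -- Step C: XOS additive witnesses for the optimal bundles
  have hC : ∀ k : Fin n, ∃ a : ι → ℝ, (∀ j, 0 ≤ a j) ∧
      (∀ S : Finset ι, ∑ j ∈ S, a j ≤ b k S) ∧
      b k (part x k) = ∑ j ∈ part x k, a j := by
    intro k
    obtain ⟨A, hA', hpos, heq⟩ := hXOS k
    obtain ⟨a, haA, hval⟩ := Finset.exists_mem_eq_sup' hA' (fun a => ∑ j ∈ part x k, a j)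
    refine ⟨a, hpos a haA, fun S => ?_, ?_⟩
    · rw [heq S]; exact Finset.le_sup' _ haA
    · rw [heq]; exact hval
  choose a hapos hale haeq using hC
  calc ∑ i, (vcgPrice b i (part q i) - vcgPrice b i (part x i))
      = ∑ i, (othersWelfare b i (Finset.univ \ part x i)
          - othersWelfare b i (Finset.univ \ part q i)) := by
        refine Finset.sum_congr rfl fun i _ => ?_
        simp only [vcgPrice]; ring
    _ ≤ ∑ i, (∑ k ∈ Finset.univ.erase i, b k (part x k)
          - ∑ k ∈ Finset.univ.erase i, b k (part x k \ part q i)) := by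
        exact Finset.sum_le_sum fun i _ => sub_le_sub (hA i) (hB i)
    _ = ∑ i, ∑ k ∈ Finset.univ.erase i,
          (b k (part x k) - b k (part x k \ part q i)) := by
        refine Finset.sum_congr rfl fun i _ => ?_
        rw [Finset.sum_sub_distrib]
    _ ≤ ∑ i, ∑ k ∈ Finset.univ.erase i, ∑ j ∈ part x k ∩ part q i, a k j := by
        refine Finset.sum_le_sum fun i _ => Finset.sum_le_sum fun k _ => ?_
        have e1 : ∑ j ∈ part x k ∩ part q i, a k j
            + ∑ j ∈ part x k \ part q i, a k j = ∑ j ∈ part x k, a k j :=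
          Finset.sum_inter_add_sum_sdiff _ _ _
        have e2 := hale k (part x k \ part q i)
        have e3 := haeq k
        linarith
    _ ≤ ∑ i : Fin n, ∑ k : Fin n, ∑ j ∈ part x k ∩ part q i, a k j := by
        refine Finset.sum_le_sum fun i _ => ?_
        refine Finset.sum_le_sum_of_subset_of_nonneg (Finset.erase_subset _ _)
          fun k _ _ => Finset.sum_nonneg fun j _ => hapos k j
    _ = ∑ k : Fin n, ∑ i : Fin n, ∑ j ∈ part x k ∩ part q i, a k j :=
        Finset.sum_comm
    _ = ∑ k : Fin n, ∑ j ∈ part x k, a k j := by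
        refine Finset.sum_congr rfl fun k _ => ?_
        have : ∀ i : Fin n, part x k ∩ part q i
            = (part x k).filter (fun j => q j = i) := by
          intro i; ext j
          simp only [part, Finset.mem_inter, Finset.mem_filter, Finset.mem_univ, true_and]
        simp only [this]
        exact Finset.sum_fiberwise _ _ _
    _ ≤ ∑ k, b k (part x k) := by
        exact le_of_eq (Finset.sum_congr rfl fun k _ => (haeq k).symm)
end

section
/- Let v_i : 2^M → ℝ≥0 be β-fractionally subadditive for β ≥ 1, and consider the VCG mechanism on XOS bids. Then for every bundle Q_i ⊆ M there exists a conservative additive bid a_i (i.e., Σ_{j∈S} a_i(j) ≤ v_i(S) for all S ⊆ M) such that for all monotone normalized bids b_{-i} of the other agents: v_i(X_i) - p_i(X_i, b_{-i}) ≥ v_i(Q_i)/β - p_i(Q_i, b_{-i}), where X_i is the bundle agent i receives in an efficient allocation for bids (a_i, b_{-i}) and p_i(S, b_{-i}) = b_{-i}(M) - b_{-i}(M \ S). -/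
/-- Deviation lemma for β-fractionally subadditive valuations. For every
bundle `Q` there is a conservative additive bid `a` such that against any monotone
normalized aggregate `b_{-i}` (given as a set function `bm`, with VCG payment
`p(S) = bm M - bm (M \ S)`), every bundle `X` that is efficient for `(a, b_{-i})`
satisfies `v X - p X ≥ v Q / β - p Q`. -/
theorem beta_xos_deviation {ι : Type*} [Fintype ι] [DecidableEq ι]
    (β : ℝ) (hβ : 1 ≤ β)
    (v : Finset ι → ℝ) (hnn : ∀ S, 0 ≤ v S)
    (hvmono : ∀ S T : Finset ι, S ⊆ T → v S ≤ v T)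
    (hβXOS : ∀ T : Finset ι, ∃ a : ι → ℝ,
      v T / β ≤ ∑ j ∈ T, a j ∧ ∀ S ⊆ T, ∑ j ∈ S, a j ≤ v S)
    (Q : Finset ι) :
    ∃ a : ι → ℝ,
      (∀ S : Finset ι, ∑ j ∈ S, a j ≤ v S) ∧
      ∀ bm : Finset ι → ℝ,
        (∀ S T : Finset ι, S ⊆ T → bm S ≤ bm T) → bm ∅ = 0 →
        ∀ X : Finset ι,
          (∀ S : Finset ι,
            (∑ j ∈ S, a j) + bm (Finset.univ \ S) ≤
              (∑ j ∈ X, a j) + bm (Finset.univ \ X)) →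
          v Q / β - (bm Finset.univ - bm (Finset.univ \ Q)) ≤
            v X - (bm Finset.univ - bm (Finset.univ \ X)) := by
  obtain ⟨a', ha1, ha2⟩ := hβXOS Q
  refine ⟨fun j => if j ∈ Q then a' j else 0, ?_, ?_⟩
  · intro S
    have h1 : (∑ j ∈ S, if j ∈ Q then a' j else 0) = ∑ j ∈ S ∩ Q, a' j := by
      rw [Finset.sum_ite_mem]
    rw [h1]
    exact le_trans (ha2 _ (Finset.inter_subset_right)) (hvmono _ _ Finset.inter_subset_left)
  · intro bm hbmono hb0 X hX
    have hQ : (∑ j ∈ Q, if j ∈ Q then a' j else 0) = ∑ j ∈ Q, a' j :=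
      Finset.sum_congr rfl (fun j hj => if_pos hj)
    have hXle : (∑ j ∈ X, if j ∈ Q then a' j else 0) ≤ v X := by
      have h1 : (∑ j ∈ X, if j ∈ Q then a' j else 0) = ∑ j ∈ X ∩ Q, a' j := by
        rw [Finset.sum_ite_mem]
      rw [h1]
      exact le_trans (ha2 _ (Finset.inter_subset_right)) (hvmono _ _ Finset.inter_subset_left)
    have key := hX Q
    rw [hQ] at key
    have : v Q / β + bm (Finset.univ \ Q) ≤ v X + bm (Finset.univ \ X) :=
      le_trans (add_le_add ha1 le_rfl) (le_trans key (add_le_add hXle le_rfl))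
    linarith
end

section
/- Abstract smoothness-to-PoA theorem: Suppose a mechanism with utilities u_i(b, v_i) = v_i(X_i(b)) - p_i(b), nonnegative payments p_i(b), and conservative bids (b_i(X_i(b)) ≤ v_i(X_i(b)) and p_i(b) ≤ b_i(X_i(b))) is relaxed (λ, μ_1, μ_2)-smooth with λ, μ_1, μ_2 ≥ 0: for every distribution 𝓑 over bid profiles there exist deviations a_1,...,a_n with Σ_i E_{b_{-i}}[u_i((a_i,b_{-i}),v_i)] ≥ λ·OPT(v) - μ_1·Σ_i E_b[p_i(b)] - μ_2·Σ_i E_b[b_i(X_i(b))]. Then for every coarse correlated equilibrium 𝓑 (i.e., Σ over each agent: E_b[u_i(b,v_i)] ≥ E_{b_{-i}}[u_i((a'_i,b_{-i}),v_i)] for all fixed a'_i), the expected welfare satisfies E_b[Σ_i v_i(X_i(b))] ≥ λ/(max{μ_1,1} + μ_2) · OPT(v). -/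
/-- Abstract smoothness-to-PoA theorem. A mechanism with utilities
`u_i(b) = vX i b - p i b`, nonnegative payments and conservative bids
(`p i b ≤ bidv i b ≤ vX i b`) that is relaxed `(λ, μ₁, μ₂)`-smooth has expected
welfare at least `λ/(max μ₁ 1 + μ₂) · OPT` at every coarse correlated
equilibrium. -/
theorem smoothness_to_cce_poa {n : ℕ} (Bi : Fin n → Type*) [∀ i, Fintype (Bi i)]
    (vX p bidv : Fin n → (∀ i, Bi i) → ℝ)
    (OPT lam mu1 mu2 : ℝ)
    (hOPT : 0 ≤ OPT) (hlam : 0 ≤ lam) (hmu1 : 0 ≤ mu1) (hmu2 : 0 ≤ mu2)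
    (hp : ∀ i b, 0 ≤ p i b)
    (hcons1 : ∀ i b, p i b ≤ bidv i b)
    (hcons2 : ∀ i b, bidv i b ≤ vX i b)
    (hsmooth : ∀ w : (∀ i, Bi i) → ℝ, (∀ b, 0 ≤ w b) → ∑ b, w b = 1 →
      ∃ a : ∀ i, Bi i,
        lam * OPT - mu1 * (∑ i, ∑ b, w b * p i b)
            - mu2 * (∑ i, ∑ b, w b * bidv i b) ≤
          ∑ i, ∑ b, w b * (vX i (Function.update b i (a i))
            - p i (Function.update b i (a i))))
    (w : (∀ i, Bi i) → ℝ) (hw : ∀ b, 0 ≤ w b) (hw1 : ∑ b, w b = 1)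
    (hCCE : ∀ (i : Fin n) (a' : Bi i),
      ∑ b, w b * (vX i (Function.update b i a') - p i (Function.update b i a')) ≤
        ∑ b, w b * (vX i b - p i b)) :
    lam / (max mu1 1 + mu2) * OPT ≤ ∑ b, w b * ∑ i, vX i b := by
  obtain ⟨a, ha⟩ := hsmooth w hw hw1
  set V := ∑ i, ∑ b, w b * vX i b with hV
  set P := ∑ i, ∑ b, w b * p i b with hP
  set B := ∑ i, ∑ b, w b * bidv i b with hB
  have hswap : ∑ b, w b * ∑ i, vX i b = V := by
    rw [hV, Finset.sum_comm]
    simp [Finset.mul_sum]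
  rw [hswap]
  have hPB : P ≤ B :=
    Finset.sum_le_sum fun i _ => Finset.sum_le_sum fun b _ =>
      mul_le_mul_of_nonneg_left (hcons1 i b) (hw b)
  have hBV : B ≤ V :=
    Finset.sum_le_sum fun i _ => Finset.sum_le_sum fun b _ =>
      mul_le_mul_of_nonneg_left (hcons2 i b) (hw b)
  have hP0 : 0 ≤ P :=
    Finset.sum_nonneg fun i _ => Finset.sum_nonneg fun b _ =>
      mul_nonneg (hw b) (hp i b)
  have hdev : (∑ i, ∑ b, w b * (vX i (Function.update b i (a i))
      - p i (Function.update b i (a i)))) ≤ V - P := by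
    have h1 : (∑ i, ∑ b, w b * (vX i (Function.update b i (a i))
        - p i (Function.update b i (a i)))) ≤ ∑ i, ∑ b, w b * (vX i b - p i b) :=
      Finset.sum_le_sum fun i _ => hCCE i (a i)
    have h2 : (∑ i, ∑ b, w b * (vX i b - p i b)) = V - P := by
      rw [hV, hP, ← Finset.sum_sub_distrib]
      exact Finset.sum_congr rfl fun i _ => by
        rw [← Finset.sum_sub_distrib]
        exact Finset.sum_congr rfl fun b _ => by ring
    linarith
  have hm1 : mu1 ≤ max mu1 1 := le_max_left _ _
  have hm2 : (1:ℝ) ≤ max mu1 1 := le_max_right _ _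
  have key : lam * OPT ≤ (max mu1 1 + mu2) * V := by
    nlinarith [mul_le_mul_of_nonneg_right hm1 hP0,
      mul_le_mul_of_nonneg_left hBV hmu2,
      mul_le_mul_of_nonneg_left (hPB.trans hBV) (by linarith : (0:ℝ) ≤ max mu1 1 - 1)]
  have hD : 0 < max mu1 1 + mu2 := by linarith
  rw [div_mul_eq_mul_div, div_le_iff₀ hD]
  linarith [key]
end

section
/- Abstract smoothness-to-regret theorem: With the same hypotheses as the smoothness-to-PoA theorem, if (b^1,...,b^T) is a sequence of conservative bid profiles with vanishing average external regret, i.e., for each agent i, Σ_{t=1}^T u_i(b^t, v_i) ≥ max_{b'_i} Σ_{t=1}^T u_i((b'_i, b^t_{-i}), v_i) - R_i where R_i ≥ 0, then (1/T)·Σ_{t=1}^T SW(b^t) ≥ λ/(max{μ_1,1}+μ_2) · OPT(v) - (Σ_i R_i)/((max{μ_1,1}+μ_2)·T). -/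
/-- Abstract smoothness-to-regret theorem. Under the relaxed
smoothness inequality for the empirical distribution of a sequence of conservative
bid profiles `bs` with external regrets `R i ≥ 0`, the average welfare is at least
`λ/(max μ₁ 1 + μ₂) · OPT - (Σ_i R_i)/((max μ₁ 1 + μ₂) · T)`. -/
theorem smoothness_to_regret {n : ℕ} (Bi : Fin n → Type*)
    (vX p bidv : Fin n → (∀ i, Bi i) → ℝ)
    (OPT lam mu1 mu2 : ℝ)
    (hOPT : 0 ≤ OPT) (hlam : 0 ≤ lam) (hmu1 : 0 ≤ mu1) (hmu2 : 0 ≤ mu2)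
    (hp : ∀ i b, 0 ≤ p i b)
    (hcons1 : ∀ i b, p i b ≤ bidv i b)
    (hcons2 : ∀ i b, bidv i b ≤ vX i b)
    (T : ℕ) (hT : 1 ≤ T) (bs : Fin T → (∀ i, Bi i))
    (R : Fin n → ℝ) (hR : ∀ i, 0 ≤ R i)
    (hregret : ∀ (i : Fin n) (b' : Bi i),
      (∑ t, (vX i (Function.update (bs t) i b')
          - p i (Function.update (bs t) i b'))) - R i ≤
        ∑ t, (vX i (bs t) - p i (bs t)))
    (hsmooth : ∃ a : ∀ i, Bi i,
      lam * OPT - mu1 * ((1 / (T : ℝ)) * ∑ t, ∑ i, p i (bs t))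
          - mu2 * ((1 / (T : ℝ)) * ∑ t, ∑ i, bidv i (bs t)) ≤
        (1 / (T : ℝ)) * ∑ t, ∑ i, (vX i (Function.update (bs t) i (a i))
          - p i (Function.update (bs t) i (a i)))) :
    lam / (max mu1 1 + mu2) * OPT - (∑ i, R i) / ((max mu1 1 + mu2) * T) ≤
      (1 / (T : ℝ)) * ∑ t, ∑ i, vX i (bs t) := by
  obtain ⟨a, ha⟩ := hsmooth
  have hTpos : (0:ℝ) < (T:ℝ) := by exact_mod_cast hT
  have hmax : (1:ℝ) ≤ max mu1 1 := le_max_right _ _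
  have hμpos : (0:ℝ) < max mu1 1 + mu2 := by linarith
  set W := (1 / (T : ℝ)) * ∑ t, ∑ i, vX i (bs t) with hWdef
  set P := (1 / (T : ℝ)) * ∑ t, ∑ i, p i (bs t) with hPdef
  set B := (1 / (T : ℝ)) * ∑ t, ∑ i, bidv i (bs t) with hBdef
  set D := (1 / (T : ℝ)) * ∑ t, ∑ i, (vX i (Function.update (bs t) i (a i))
      - p i (Function.update (bs t) i (a i))) with hDdef
  have hreg : D - (∑ i, R i) / (T:ℝ) ≤ W - P := by
    have h1 : ∑ i, ((∑ t, (vX i (Function.update (bs t) i (a i))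
        - p i (Function.update (bs t) i (a i)))) - R i) ≤
        ∑ i, ∑ t, (vX i (bs t) - p i (bs t)) :=
      Finset.sum_le_sum fun i _ => hregret i (a i)
    rw [Finset.sum_sub_distrib, Finset.sum_comm] at h1
    have h2 : ∑ i, ∑ t, (vX i (bs t) - p i (bs t)) =
        (∑ t, ∑ i, vX i (bs t)) - ∑ t, ∑ i, p i (bs t) := by
      rw [Finset.sum_comm]
      simp [Finset.sum_sub_distrib]
    rw [h2] at h1
    have hinv : (0:ℝ) ≤ 1 / (T:ℝ) := le_of_lt (one_div_pos.mpr hTpos)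
    have h3 := mul_le_mul_of_nonneg_left h1 hinv
    rw [mul_sub, mul_sub] at h3
    have h4 : (∑ i, R i) / (T:ℝ) = 1 / (T:ℝ) * ∑ i, R i := by ring
    rw [hDdef, hWdef, hPdef, h4]
    linarith
  have hPnn : 0 ≤ P := by
    rw [hPdef]
    exact mul_nonneg (by positivity)
      (Finset.sum_nonneg fun t _ => Finset.sum_nonneg fun i _ => hp i (bs t))
  have hPB : P ≤ B := by
    rw [hPdef, hBdef]
    have : ∑ t, ∑ i, p i (bs t) ≤ ∑ t, ∑ i, bidv i (bs t) :=
      Finset.sum_le_sum fun t _ => Finset.sum_le_sum fun i _ => hcons1 i (bs t)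
    nlinarith [one_div_pos.mpr hTpos]
  have hBW : B ≤ W := by
    rw [hBdef, hWdef]
    have : ∑ t, ∑ i, bidv i (bs t) ≤ ∑ t, ∑ i, vX i (bs t) :=
      Finset.sum_le_sum fun t _ => Finset.sum_le_sum fun i _ => hcons2 i (bs t)
    nlinarith [one_div_pos.mpr hTpos]
  have key : lam * OPT - (∑ i, R i) / (T:ℝ) ≤ (max mu1 1 + mu2) * W := by
    have hmu1' : mu1 ≤ max mu1 1 := le_max_left _ _
    nlinarith [mul_le_mul_of_nonneg_right hmu1' hPnn]
  have heq : lam / (max mu1 1 + mu2) * OPT - (∑ i, R i) / ((max mu1 1 + mu2) * T)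
      = (lam * OPT - (∑ i, R i) / (T:ℝ)) / (max mu1 1 + mu2) := by
    field_simp
  rw [heq, div_le_iff₀ hμpos]
  linarith [key]
end

section
/- Outcome closure implies equilibrium containment: Let B' ⊆ B be bid spaces and suppose a mechanism satisfies outcome closure, i.e., for every valuation profile v, agent i, conservative b'_{-i} ∈ B'_{-i}, and conservative b_i ∈ B_i, there exists a conservative b''_i ∈ B'_i with u_i((b''_i, b'_{-i}), v_i) ≥ u_i((b_i, b'_{-i}), v_i). Then every conservative pure Nash equilibrium of the mechanism restricted to B' is also a pure Nash equilibrium with respect to deviations in B; consequently the Price of Anarchy over pure Nash equilibria for B is at least that for B'. -/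
/-- Outcome closure implies equilibrium containment. If a mechanism
satisfies outcome closure for the restriction from bid spaces `B` to `B' ⊆ B`, then
every conservative pure Nash equilibrium w.r.t. `B'` is also a pure Nash
equilibrium w.r.t. deviations in `B`; consequently the Price of Anarchy (the
supremum of `OPT / SW b` over pure Nash equilibria) for `B` is at least that
for `B'`. -/
theorem outcome_closure_equilibria {n : ℕ} (Bid : Fin n → Type*)
    (B B' : ∀ i, Set (Bid i)) (hBB : ∀ i, B' i ⊆ B i)
    (cons : ∀ i, Bid i → Prop)
    (u : Fin n → (∀ i, Bid i) → ℝ)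
    (hclose : ∀ (i : Fin n) (b' : ∀ k, Bid k),
      (∀ k, b' k ∈ B' k ∧ cons k (b' k)) →
      ∀ bi ∈ B i, cons i bi →
        ∃ b'' ∈ B' i, cons i b'' ∧
          u i (Function.update b' i bi) ≤ u i (Function.update b' i b''))
    (SW : (∀ i, Bid i) → ℝ) (OPT : ℝ) :
    (∀ b : ∀ i, Bid i,
      (∀ k, b k ∈ B' k ∧ cons k (b k)) →
      (∀ i, ∀ c ∈ B' i, cons i c → u i (Function.update b i c) ≤ u i b) →
      (∀ i, ∀ c ∈ B i, cons i c → u i (Function.update b i c) ≤ u i b)) ∧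
    (BddAbove {r : ℝ | ∃ b : ∀ i, Bid i,
        (∀ k, b k ∈ B k ∧ cons k (b k)) ∧
        (∀ i, ∀ c ∈ B i, cons i c → u i (Function.update b i c) ≤ u i b) ∧
        r = OPT / SW b} →
      {r : ℝ | ∃ b : ∀ i, Bid i,
        (∀ k, b k ∈ B' k ∧ cons k (b k)) ∧
        (∀ i, ∀ c ∈ B' i, cons i c → u i (Function.update b i c) ≤ u i b) ∧
        r = OPT / SW b}.Nonempty →
      sSup {r : ℝ | ∃ b : ∀ i, Bid i,
        (∀ k, b k ∈ B' k ∧ cons k (b k)) ∧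
        (∀ i, ∀ c ∈ B' i, cons i c → u i (Function.update b i c) ≤ u i b) ∧
        r = OPT / SW b} ≤
      sSup {r : ℝ | ∃ b : ∀ i, Bid i,
        (∀ k, b k ∈ B k ∧ cons k (b k)) ∧
        (∀ i, ∀ c ∈ B i, cons i c → u i (Function.update b i c) ≤ u i b) ∧
        r = OPT / SW b}) := by
  have key : ∀ b : ∀ i, Bid i,
      (∀ k, b k ∈ B' k ∧ cons k (b k)) →
      (∀ i, ∀ c ∈ B' i, cons i c → u i (Function.update b i c) ≤ u i b) →
      (∀ i, ∀ c ∈ B i, cons i c → u i (Function.update b i c) ≤ u i b) := by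
    intro b hb hne i c hc hcons
    obtain ⟨b'', hb''B, hb''c, hle⟩ := hclose i b hb c hc hcons
    exact hle.trans (hne i b'' hb''B hb''c)
  refine ⟨key, fun hbdd hne => csSup_le_csSup hbdd hne ?_⟩
  rintro r ⟨b, hb, hNE, rfl⟩
  exact ⟨b, fun k => ⟨hBB k (hb k).1, (hb k).2⟩, key b hb hNE, rfl⟩
end

section
/- The VCG mechanism satisfies outcome closure for the restriction from XOS bids to additive bids: for every agent i with bid b_i ∈ XOS and any bids b'_{-i} of the other agents, letting X_i be agent i's bundle under (b_i, b'_{-i}), there exists a conservative additive bid b''_i (with b''_i(j) = 0 for j ∉ X_i, Σ_{j∈X_i} b''_i(j) = b_i(X_i), and Σ_{j∈S} b''_i(j) ≤ b_i(S) for all S ⊆ X_i) such that under bids (b''_i, b'_{-i}) the VCG mechanism can assign agent i the same bundle X_i at the same payment, and agent i's reported utility for every other bundle T under b''_i is no higher than under b_i. -/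
/-- VCG satisfies outcome closure for the restriction from XOS bids
to additive bids. Given an XOS bid `b`, prices `p` (independent of agent `i`'s
bid) and a bundle `X` maximizing `b T - p T`, there is a conservative additive
bid `a` supported on `X`, tight on `X`, below `b` everywhere, under which `X`
still maximizes the reported utility (hence the same bundle at the same payment
can be assigned). -/
theorem vcg_outcome_closure_xos_to_additive {ι : Type*} [Fintype ι] [DecidableEq ι]
    (b : Finset ι → ℝ)
    (hXOS : ∃ (A : Finset (ι → ℝ)) (hA : A.Nonempty),
      (∀ a ∈ A, ∀ j, 0 ≤ a j) ∧
      ∀ S : Finset ι, b S = A.sup' hA (fun a => ∑ j ∈ S, a j))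
    (p : Finset ι → ℝ) (X : Finset ι)
    (hmax : ∀ T : Finset ι, b T - p T ≤ b X - p X) :
    ∃ a : ι → ℝ,
      (∀ j ∉ X, a j = 0) ∧
      (∑ j ∈ X, a j = b X) ∧
      (∀ S ⊆ X, ∑ j ∈ S, a j ≤ b S) ∧
      (∀ T : Finset ι, ∑ j ∈ T, a j ≤ b T) ∧
      (∀ T : Finset ι, (∑ j ∈ T, a j) - p T ≤ (∑ j ∈ X, a j) - p X) := by
  obtain ⟨A, hA, hpos, hsup⟩ := hXOS
  -- pick maximizer at X
  obtain ⟨a0, ha0A, ha0⟩ := A.exists_mem_eq_sup' hA (fun a => ∑ j ∈ X, a j)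
  refine ⟨fun j => if j ∈ X then a0 j else 0, fun j hj => if_neg hj, ?_, ?_, ?_, ?_⟩
  · rw [hsup X, ha0]
    exact Finset.sum_congr rfl fun j hj => if_pos hj
  · intro S hS
    rw [hsup S]
    calc ∑ j ∈ S, (if j ∈ X then a0 j else 0) = ∑ j ∈ S, a0 j :=
          Finset.sum_congr rfl fun j hj => if_pos (hS hj)
      _ ≤ A.sup' hA (fun a => ∑ j ∈ S, a j) := Finset.le_sup' _ ha0A
  · intro T
    have h1 : ∑ j ∈ T, (if j ∈ X then a0 j else 0) = ∑ j ∈ T ∩ X, a0 j := by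
      rw [Finset.sum_ite_mem]
    have h2 : ∑ j ∈ T ∩ X, a0 j ≤ ∑ j ∈ T, a0 j :=
      Finset.sum_le_sum_of_subset_of_nonneg Finset.inter_subset_left
        (fun j _ _ => hpos a0 ha0A j)
    have h3 : ∑ j ∈ T, a0 j ≤ b T := by
      rw [hsup T]; exact Finset.le_sup' _ ha0A
    linarith
  · intro T
    have hX : ∑ j ∈ X, (if j ∈ X then a0 j else 0) = b X := by
      rw [hsup X, ha0]
      exact Finset.sum_congr rfl fun j hj => if_pos hj
    have h1 : ∑ j ∈ T, (if j ∈ X then a0 j else 0) = ∑ j ∈ T ∩ X, a0 j := by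
      rw [Finset.sum_ite_mem]
    have h2 : ∑ j ∈ T ∩ X, a0 j ≤ ∑ j ∈ T, a0 j :=
      Finset.sum_le_sum_of_subset_of_nonneg Finset.inter_subset_left
        (fun j _ _ => hpos a0 ha0A j)
    have h3 : ∑ j ∈ T, a0 j ≤ b T := by
      rw [hsup T]; exact Finset.le_sup' _ ha0A
    have := hmax T
    linarith
end

section
/- In the two-agent six-item instance with subadditive valuations (items partitioned into X_1, X_2 with |X_1| = |X_2| = 3; agent i values: 12 on all of X_i, 6 on nonempty proper subsets of X_i, 5+ε on all of X_{i+1}, 4+2ε on 2-subsets of X_{i+1}, 3+3ε on singletons of X_{i+1}, and max of the two projections otherwise), the bid profile where each agent i bids 0 on subsets of X_i and his true values on subsets of X_{i+1} is a conservative pure Nash equilibrium of the VCG mechanism, and its welfare is 10+2ε while the optimal welfare is 24; hence the Price of Anarchy with respect to pure Nash equilibria for subadditive valuations and XOS bids is at least 2.4 - δ for every δ > 0 (choosing ε small). -/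
/-- The two bundles of three items each: `X 0 = {0,1,2}`, `X 1 = {3,4,5}`. -/
def Xset (i : Fin 2) : Finset (Fin 6) :=
  if i = 0 then {0, 1, 2} else {3, 4, 5}

/-- Valuation for subsets of the agent's own bundle. -/
noncomputable def vOwn (S : Finset (Fin 6)) : ℝ :=
  if S.card = 3 then 12 else if 1 ≤ S.card then 6 else 0

/-- Valuation for subsets of the other agent's bundle. -/
noncomputable def vOth (ε : ℝ) (S : Finset (Fin 6)) : ℝ :=
  if S.card = 3 then 5 + ε else if S.card = 2 then 4 + 2 * ε
  else if S.card = 1 then 3 + 3 * ε else 0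

/-- The valuation of agent `i` (indices mod 2). -/
noncomputable def val (ε : ℝ) (i : Fin 2) (S : Finset (Fin 6)) : ℝ :=
  max (vOwn (S ∩ Xset i)) (vOth ε (S ∩ Xset (i + 1)))

/-- The equilibrium bid of agent `i`: zero on own bundle, true values on the
other agent's bundle. -/
noncomputable def bid (ε : ℝ) (i : Fin 2) (S : Finset (Fin 6)) : ℝ :=
  vOth ε (S ∩ Xset (i + 1))

/-- The bundle of agent `i` in the allocation encoded by `g`. -/
def part2 (g : Fin 6 → Fin 2) (i : Fin 2) : Finset (Fin 6) :=
  Finset.univ.filter (fun j => g j = i)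


section Helpers
variable {ε : ℝ}

lemma vOth_nonneg (hε0 : 0 ≤ ε) (S : Finset (Fin 6)) : 0 ≤ vOth ε S := by
  unfold vOth; split_ifs <;> linarith

lemma vOth_le_top (hε0 : 0 ≤ ε) (hε1 : ε ≤ 1) (S : Finset (Fin 6)) : vOth ε S ≤ 5 + ε := by
  unfold vOth; split_ifs <;> linarith

lemma vOth_ge_one (hε1 : ε ≤ 1) {S : Finset (Fin 6)} (h1 : 1 ≤ S.card) (h3 : S.card ≤ 3) :
    3 + 3*ε ≤ vOth ε S := by
  unfold vOth; split_ifs <;> first | (exfalso; omega) | linarith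

lemma vOth_ge_two (hε1 : ε ≤ 1) {S : Finset (Fin 6)} (h1 : 2 ≤ S.card) (h3 : S.card ≤ 3) :
    4 + 2*ε ≤ vOth ε S := by
  unfold vOth; split_ifs <;> first | (exfalso; omega) | linarith

lemma vOth_c0 {S : Finset (Fin 6)} (h : S.card = 0) : vOth ε S = 0 := by simp [vOth, h]
lemma vOth_c1 {S : Finset (Fin 6)} (h : S.card = 1) : vOth ε S = 3 + 3*ε := by simp [vOth, h]
lemma vOth_c2 {S : Finset (Fin 6)} (h : S.card = 2) : vOth ε S = 4 + 2*ε := by simp [vOth, h]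
lemma vOth_c3 {S : Finset (Fin 6)} (h : S.card = 3) : vOth ε S = 5 + ε := by simp [vOth, h]

lemma vOwn_le12 (S : Finset (Fin 6)) : vOwn S ≤ 12 := by
  unfold vOwn; split_ifs <;> norm_num

lemma vOwn_c0 {S : Finset (Fin 6)} (h : S.card = 0) : vOwn S = 0 := by simp [vOwn, h]
lemma vOwn_c2 {S : Finset (Fin 6)} (h : S.card = 2) : vOwn S = 6 := by simp [vOwn, h]
lemma vOwn_c3 {S : Finset (Fin 6)} (h : S.card = 3) : vOwn S = 12 := by simp [vOwn, h]
lemma vOwn_le6 {S : Finset (Fin 6)} (h : S.card ≤ 2) : vOwn S ≤ 6 := by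
  unfold vOwn; split_ifs <;> first | (exfalso; omega) | norm_num

lemma card_Xset (i : Fin 2) : (Xset i).card = 3 := by fin_cases i <;> decide

lemma card_inter_Xset (i : Fin 2) (S : Finset (Fin 6)) : (S ∩ Xset i).card ≤ 3 := by
  calc (S ∩ Xset i).card ≤ (Xset i).card := Finset.card_le_card Finset.inter_subset_right
  _ = 3 := card_Xset i

lemma card_inter_triple (S : Finset (Fin 6)) (x y z : Fin 6) (hxy : x ≠ y) (hxz : x ≠ z) (hyz : y ≠ z) :
    (S ∩ {x, y, z}).card = (if x ∈ S then 1 else 0) + (if y ∈ S then 1 else 0) + (if z ∈ S then 1 else 0) := by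
  rw [Finset.inter_comm, ← Finset.filter_mem_eq_inter]
  rw [Finset.filter_insert, Finset.filter_insert, Finset.filter_singleton]
  split_ifs <;> simp_all [Finset.card_insert_of_notMem, hxy, hxz, hyz]

-- subadditivity pieces
lemma vOwn_subadd {A B : Finset (Fin 6)} (hu : (A ∪ B).card ≤ 3) :
    vOwn (A ∪ B) ≤ vOwn A + vOwn B := by
  have h1 : A.card ≤ (A ∪ B).card := Finset.card_le_card Finset.subset_union_left
  have h2 : B.card ≤ (A ∪ B).card := Finset.card_le_card Finset.subset_union_right
  have h3 : (A ∪ B).card ≤ A.card + B.card := Finset.card_union_le A B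
  unfold vOwn; split_ifs <;> first | (exfalso; omega) | linarith

lemma vOth_subadd (hε0 : 0 ≤ ε) (hε1 : ε ≤ 1) {A B : Finset (Fin 6)} (hu : (A ∪ B).card ≤ 3) :
    vOth ε (A ∪ B) ≤ vOth ε A + vOth ε B := by
  have h1 : A.card ≤ (A ∪ B).card := Finset.card_le_card Finset.subset_union_left
  have h2 : B.card ≤ (A ∪ B).card := Finset.card_le_card Finset.subset_union_right
  have h3 : (A ∪ B).card ≤ A.card + B.card := Finset.card_union_le A B
  unfold vOth; split_ifs <;> first | (exfalso; omega) | linarith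

lemma val_le_12 (hε0 : 0 ≤ ε) (hε1 : ε ≤ 1) (i : Fin 2) (S : Finset (Fin 6)) :
    val ε i S ≤ 12 := by
  unfold val
  exact max_le (vOwn_le12 _) (le_trans (vOth_le_top hε0 hε1 _) (by linarith))

end Helpers

noncomputable def wts (ε : ℝ) : Fin 7 → ℝ × ℝ × ℝ
  | 0 => (3+3*ε, 0, 0)
  | 1 => (0, 3+3*ε, 0)
  | 2 => (0, 0, 3+3*ε)
  | 3 => (2+ε, 2+ε, 0)
  | 4 => (2+ε, 0, 2+ε)
  | 5 => (0, 2+ε, 2+ε)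
  | 6 => ((5+ε)/3, (5+ε)/3, (5+ε)/3)

noncomputable def clause (ε : ℝ) (x y z : Fin 6) (k : Fin 7) : Fin 6 → ℝ := fun j =>
  (if j = x then (wts ε k).1 else 0) + (if j = y then (wts ε k).2.1 else 0)
    + (if j = z then (wts ε k).2.2 else 0)

lemma sum_clause (ε : ℝ) (x y z : Fin 6) (k : Fin 7) (S : Finset (Fin 6)) :
    ∑ j ∈ S, clause ε x y z k j =
      (if x ∈ S then (wts ε k).1 else 0) + (if y ∈ S then (wts ε k).2.1 else 0)
        + (if z ∈ S then (wts ε k).2.2 else 0) := by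
  unfold clause
  rw [Finset.sum_add_distrib, Finset.sum_add_distrib,
    Finset.sum_ite_eq' S x (fun _ => (wts ε k).1),
    Finset.sum_ite_eq' S y (fun _ => (wts ε k).2.1),
    Finset.sum_ite_eq' S z (fun _ => (wts ε k).2.2)]

lemma isXOS_aux {ε : ℝ} (hε0 : 0 ≤ ε) (hε1 : ε ≤ 1) (x y z : Fin 6)
    (hxy : x ≠ y) (hxz : x ≠ z) (hyz : y ≠ z) :
    IsXOS (fun S => vOth ε (S ∩ {x, y, z})) := by
  classical
  refine ⟨Finset.image (clause ε x y z) Finset.univ,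
    ⟨clause ε x y z 0, Finset.mem_image_of_mem _ (Finset.mem_univ 0)⟩, ?_, ?_⟩
  · rintro a ha j
    simp only [Finset.mem_image, Finset.mem_univ, true_and] at ha
    obtain ⟨k, rfl⟩ := ha
    unfold clause
    fin_cases k <;> simp [wts] <;> split_ifs <;> linarith
  · intro S
    have hcard := card_inter_triple S x y z hxy hxz hyz
    by_cases hx : x ∈ S <;> by_cases hy : y ∈ S <;> by_cases hz : z ∈ S <;>
      simp only [hx, hy, hz, if_true, if_false] at hcard <;>
      simp only []
    · rw [show vOth ε (S ∩ {x, y, z}) = _ from vOth_c3 (by omega)]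
      apply le_antisymm
      · refine le_trans ?_ (Finset.le_sup' _ (Finset.mem_image_of_mem _ (Finset.mem_univ 6)))
        rw [sum_clause]
        simp only [hx, hy, hz, if_true, if_false, wts]
        first | linarith | norm_num
      · apply Finset.sup'_le
        rintro a ha
        simp only [Finset.mem_image, Finset.mem_univ, true_and] at ha
        obtain ⟨k, rfl⟩ := ha
        rw [sum_clause]
        simp only [hx, hy, hz, if_true, if_false]
        fin_cases k <;> simp [wts] <;> linarith
    · rw [show vOth ε (S ∩ {x, y, z}) = _ from vOth_c2 (by omega)]
      apply le_antisymm
      · refine le_trans ?_ (Finset.le_sup' _ (Finset.mem_image_of_mem _ (Finset.mem_univ 3)))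
        rw [sum_clause]
        simp only [hx, hy, hz, if_true, if_false, wts]
        first | linarith | norm_num
      · apply Finset.sup'_le
        rintro a ha
        simp only [Finset.mem_image, Finset.mem_univ, true_and] at ha
        obtain ⟨k, rfl⟩ := ha
        rw [sum_clause]
        simp only [hx, hy, hz, if_true, if_false]
        fin_cases k <;> simp [wts] <;> linarith
    · rw [show vOth ε (S ∩ {x, y, z}) = _ from vOth_c2 (by omega)]
      apply le_antisymm
      · refine le_trans ?_ (Finset.le_sup' _ (Finset.mem_image_of_mem _ (Finset.mem_univ 4)))
        rw [sum_clause]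
        simp only [hx, hy, hz, if_true, if_false, wts]
        first | linarith | norm_num
      · apply Finset.sup'_le
        rintro a ha
        simp only [Finset.mem_image, Finset.mem_univ, true_and] at ha
        obtain ⟨k, rfl⟩ := ha
        rw [sum_clause]
        simp only [hx, hy, hz, if_true, if_false]
        fin_cases k <;> simp [wts] <;> linarith
    · rw [show vOth ε (S ∩ {x, y, z}) = _ from vOth_c1 (by omega)]
      apply le_antisymm
      · refine le_trans ?_ (Finset.le_sup' _ (Finset.mem_image_of_mem _ (Finset.mem_univ 0)))
        rw [sum_clause]
        simp only [hx, hy, hz, if_true, if_false, wts]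
        first | linarith | norm_num
      · apply Finset.sup'_le
        rintro a ha
        simp only [Finset.mem_image, Finset.mem_univ, true_and] at ha
        obtain ⟨k, rfl⟩ := ha
        rw [sum_clause]
        simp only [hx, hy, hz, if_true, if_false]
        fin_cases k <;> simp [wts] <;> linarith
    · rw [show vOth ε (S ∩ {x, y, z}) = _ from vOth_c2 (by omega)]
      apply le_antisymm
      · refine le_trans ?_ (Finset.le_sup' _ (Finset.mem_image_of_mem _ (Finset.mem_univ 5)))
        rw [sum_clause]
        simp only [hx, hy, hz, if_true, if_false, wts]
        first | linarith | norm_num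
      · apply Finset.sup'_le
        rintro a ha
        simp only [Finset.mem_image, Finset.mem_univ, true_and] at ha
        obtain ⟨k, rfl⟩ := ha
        rw [sum_clause]
        simp only [hx, hy, hz, if_true, if_false]
        fin_cases k <;> simp [wts] <;> linarith
    · rw [show vOth ε (S ∩ {x, y, z}) = _ from vOth_c1 (by omega)]
      apply le_antisymm
      · refine le_trans ?_ (Finset.le_sup' _ (Finset.mem_image_of_mem _ (Finset.mem_univ 1)))
        rw [sum_clause]
        simp only [hx, hy, hz, if_true, if_false, wts]
        first | linarith | norm_num
      · apply Finset.sup'_le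
        rintro a ha
        simp only [Finset.mem_image, Finset.mem_univ, true_and] at ha
        obtain ⟨k, rfl⟩ := ha
        rw [sum_clause]
        simp only [hx, hy, hz, if_true, if_false]
        fin_cases k <;> simp [wts] <;> linarith
    · rw [show vOth ε (S ∩ {x, y, z}) = _ from vOth_c1 (by omega)]
      apply le_antisymm
      · refine le_trans ?_ (Finset.le_sup' _ (Finset.mem_image_of_mem _ (Finset.mem_univ 2)))
        rw [sum_clause]
        simp only [hx, hy, hz, if_true, if_false, wts]
        first | linarith | norm_num
      · apply Finset.sup'_le
        rintro a ha
        simp only [Finset.mem_image, Finset.mem_univ, true_and] at ha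
        obtain ⟨k, rfl⟩ := ha
        rw [sum_clause]
        simp only [hx, hy, hz, if_true, if_false]
        fin_cases k <;> simp [wts] <;> linarith
    · rw [show vOth ε (S ∩ {x, y, z}) = _ from vOth_c0 (by omega)]
      apply le_antisymm
      · refine le_trans ?_ (Finset.le_sup' _ (Finset.mem_image_of_mem _ (Finset.mem_univ 0)))
        rw [sum_clause]
        simp only [hx, hy, hz, if_true, if_false]
        first | linarith | norm_num
      · apply Finset.sup'_le
        rintro a ha
        simp only [Finset.mem_image, Finset.mem_univ, true_and] at ha
        obtain ⟨k, rfl⟩ := ha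
        rw [sum_clause]
        simp only [hx, hy, hz, if_true, if_false]
        first | linarith | norm_num

/-- In the two-agent six-item instance the valuations are
subadditive, the bids are conservative XOS bids forming a pure Nash equilibrium
of the VCG mechanism, its welfare is `10 + 2ε` while the optimum is `24`, so the
Price of Anarchy for subadditive valuations and XOS bids is at least `2.4 - δ`
for every `δ > 0` (choosing `ε` small). -/
theorem poa_lower_bound_oxs_subadditive :
    ∀ δ : ℝ, 0 < δ → ∃ ε : ℝ, 0 < ε ∧
      -- the valuations are subadditive
      (∀ (i : Fin 2) (S T : Finset (Fin 6)),
        val ε i (S ∪ T) ≤ val ε i S + val ε i T) ∧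
      -- the bids are XOS and conservative
      (∀ i : Fin 2, IsXOS (bid ε i)) ∧
      (∀ (i : Fin 2) (S : Finset (Fin 6)), bid ε i S ≤ val ε i S) ∧
      -- the allocation giving `Xset (i+1)` to agent `i` is bid-maximizing
      (∀ g : Fin 6 → Fin 2,
        bid ε 0 (part2 g 0) + bid ε 1 (part2 g 1) ≤
          bid ε 0 (Xset 1) + bid ε 1 (Xset 0)) ∧
      -- equilibrium welfare is 10 + 2ε
      (val ε 0 (Xset 1) + val ε 1 (Xset 0) = 10 + 2 * ε) ∧
      -- optimal welfare is 24
      IsGreatest {w : ℝ | ∃ g : Fin 6 → Fin 2,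
        w = val ε 0 (part2 g 0) + val ε 1 (part2 g 1)} 24 ∧
      -- pure Nash equilibrium: any conservative XOS deviation of agent `i`,
      -- under any resulting bid-maximizing VCG allocation, yields utility at
      -- most the equilibrium utility `5 + ε`
      (∀ (i : Fin 2) (c : Finset (Fin 6) → ℝ), IsXOS c →
        (∀ S, c S ≤ val ε i S) →
        ∀ g : Fin 6 → Fin 2,
          (∀ g' : Fin 6 → Fin 2,
            c (part2 g' i) + bid ε (i + 1) (part2 g' (i + 1)) ≤
              c (part2 g i) + bid ε (i + 1) (part2 g (i + 1))) →
          val ε i (part2 g i) -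
              (bid ε (i + 1) Finset.univ -
                bid ε (i + 1) (Finset.univ \ part2 g i)) ≤ 5 + ε) ∧
      -- hence the Price of Anarchy is at least 2.4 - δ
      2.4 - δ ≤ 24 / (10 + 2 * ε) := by
  
  intro δ hδ
  refine ⟨min (δ/2) (1/2), ?_, ?_⟩
  · positivity
  set ε := min (δ/2) (1/2) with hεdef
  have hεδ : ε ≤ δ/2 := min_le_left _ _
  have hεhalf : ε ≤ 1/2 := min_le_right _ _
  have hε1 : ε ≤ 1 := by linarith
  have hεpos : 0 < ε := by positivity
  have hε0 : 0 ≤ ε := hεpos.le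
  have fin2 : ∀ a b : Fin 2, a = b + 1 ↔ ¬ a = b := by decide
  have h2step : ∀ i : Fin 2, i + 1 + 1 = i := by decide
  have hdisj : ∀ i : Fin 2, Xset i ∩ Xset (i+1) = ∅ := by decide
  refine ⟨?_, ?_, ?_, ?_, ?_, ?_, ?_, ?_⟩
  · -- subadditivity
    intro i S T
    have hdist : ∀ j : Fin 2, (S ∪ T) ∩ Xset j = (S ∩ Xset j) ∪ (T ∩ Xset j) :=
      fun j => Finset.union_inter_distrib_right _ _ _
    show max _ _ ≤ _
    apply max_le
    · calc vOwn ((S ∪ T) ∩ Xset i) = vOwn ((S ∩ Xset i) ∪ (T ∩ Xset i)) := by rw [hdist]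
      _ ≤ vOwn (S ∩ Xset i) + vOwn (T ∩ Xset i) := vOwn_subadd (by rw [← hdist]; exact card_inter_Xset i _)
      _ ≤ val ε i S + val ε i T := add_le_add (le_max_left _ _) (le_max_left _ _)
    · calc vOth ε ((S ∪ T) ∩ Xset (i+1)) = vOth ε ((S ∩ Xset (i+1)) ∪ (T ∩ Xset (i+1))) := by rw [hdist]
      _ ≤ vOth ε (S ∩ Xset (i+1)) + vOth ε (T ∩ Xset (i+1)) := vOth_subadd hε0 hε1 (by rw [← hdist]; exact card_inter_Xset _ _)
      _ ≤ val ε i S + val ε i T := add_le_add (le_max_right _ _) (le_max_right _ _)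
  · -- XOS bids
    intro i
    fin_cases i
    · show IsXOS (fun S => vOth ε (S ∩ Xset (0+1)))
      have : Xset (0+1) = ({3,4,5} : Finset (Fin 6)) := by decide
      rw [this]
      exact isXOS_aux hε0 hε1 3 4 5 (by decide) (by decide) (by decide)
    · show IsXOS (fun S => vOth ε (S ∩ Xset (1+1)))
      have : Xset (1+1) = ({0,1,2} : Finset (Fin 6)) := by decide
      rw [this]
      exact isXOS_aux hε0 hε1 0 1 2 (by decide) (by decide) (by decide)
  · -- conservative
    intro i S
    exact le_max_right _ _
  · -- bid-maximizing
    intro g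
    have hL0 : bid ε 0 (part2 g 0) ≤ 5 + ε := vOth_le_top hε0 hε1 _
    have hL1 : bid ε 1 (part2 g 1) ≤ 5 + ε := vOth_le_top hε0 hε1 _
    have hR0 : bid ε 0 (Xset 1) = 5 + ε := by
      show vOth ε (Xset 1 ∩ Xset (0+1)) = 5 + ε
      rw [show Xset 1 ∩ Xset (0+1) = Xset 1 by decide]
      exact vOth_c3 (card_Xset 1)
    have hR1 : bid ε 1 (Xset 0) = 5 + ε := by
      show vOth ε (Xset 0 ∩ Xset (1+1)) = 5 + ε
      rw [show Xset 0 ∩ Xset (1+1) = Xset 0 by decide]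
      exact vOth_c3 (card_Xset 0)
    rw [hR0, hR1]; linarith
  · -- equilibrium welfare
    have hv0 : val ε 0 (Xset 1) = 5 + ε := by
      show max (vOwn (Xset 1 ∩ Xset 0)) (vOth ε (Xset 1 ∩ Xset (0+1))) = 5 + ε
      rw [show Xset 1 ∩ Xset 0 = (∅ : Finset (Fin 6)) by decide,
        show Xset 1 ∩ Xset (0+1) = Xset 1 by decide,
        vOwn_c0 (Finset.card_empty), vOth_c3 (card_Xset 1)]
      exact max_eq_right (by linarith)
    have hv1 : val ε 1 (Xset 0) = 5 + ε := by
      show max (vOwn (Xset 0 ∩ Xset 1)) (vOth ε (Xset 0 ∩ Xset (1+1))) = 5 + ε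
      rw [show Xset 0 ∩ Xset 1 = (∅ : Finset (Fin 6)) by decide,
        show Xset 0 ∩ Xset (1+1) = Xset 0 by decide,
        vOwn_c0 (Finset.card_empty), vOth_c3 (card_Xset 0)]
      exact max_eq_right (by linarith)
    rw [hv0, hv1]; ring
  · -- optimum is 24
    constructor
    · refine ⟨fun j => if (j:ℕ) < 3 then 0 else 1, ?_⟩
      have hp0 : part2 (fun j : Fin 6 => if (j:ℕ) < 3 then (0:Fin 2) else 1) 0 = Xset 0 := by decide
      have hp1 : part2 (fun j : Fin 6 => if (j:ℕ) < 3 then (0:Fin 2) else 1) 1 = Xset 1 := by decide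
      rw [hp0, hp1]
      have hv0 : val ε 0 (Xset 0) = 12 := by
        show max (vOwn (Xset 0 ∩ Xset 0)) (vOth ε (Xset 0 ∩ Xset (0+1))) = 12
        rw [show Xset 0 ∩ Xset 0 = Xset 0 from Finset.inter_self _,
          show Xset 0 ∩ Xset (0+1) = (∅ : Finset (Fin 6)) by decide,
          vOwn_c3 (card_Xset 0), vOth_c0 (Finset.card_empty)]
        exact max_eq_left (by norm_num)
      have hv1 : val ε 1 (Xset 1) = 12 := by
        show max (vOwn (Xset 1 ∩ Xset 1)) (vOth ε (Xset 1 ∩ Xset (1+1))) = 12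
        rw [show Xset 1 ∩ Xset 1 = Xset 1 from Finset.inter_self _,
          show Xset 1 ∩ Xset (1+1) = (∅ : Finset (Fin 6)) by decide,
          vOwn_c3 (card_Xset 1), vOth_c0 (Finset.card_empty)]
        exact max_eq_left (by norm_num)
      rw [hv0, hv1]; norm_num
    · rintro w ⟨g, rfl⟩
      have := val_le_12 hε0 hε1 0 (part2 g 0)
      have := val_le_12 hε0 hε1 1 (part2 g 1)
      linarith
  · -- Nash equilibrium
    intro i c hXOS hcons g hmax
    set S := part2 g i with hSdef
    have hcompl' : ∀ g' : Fin 6 → Fin 2, part2 g' (i+1) = Finset.univ \ part2 g' i := by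
      intro g'
      ext j
      simp only [part2, Finset.mem_filter, Finset.mem_univ, true_and, Finset.mem_sdiff]
      exact fin2 (g' j) i
    have hcompl : part2 g (i+1) = Finset.univ \ S := hcompl' g
    have hbid : ∀ T, bid ε (i+1) T = vOth ε (T ∩ Xset i) := by
      intro T
      show vOth ε (T ∩ Xset (i+1+1)) = _
      rw [h2step i]
    have hsd : (Finset.univ \ S) ∩ Xset i = Xset i \ S := by
      ext m
      simp only [Finset.mem_inter, Finset.mem_sdiff, Finset.mem_univ, true_and]
      tauto
    have huniv : bid ε (i+1) Finset.univ = 5 + ε := by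
      rw [hbid, Finset.univ_inter]
      exact vOth_c3 (card_Xset i)
    rw [huniv, hbid, hsd]
    -- now case on the size of S ∩ Xset i
    have hk3 : (S ∩ Xset i).card ≤ 3 := card_inter_Xset i S
    have hkdiff : (Xset i \ S).card = 3 - (S ∩ Xset i).card := by
      rw [show Xset i \ S = Xset i \ (S ∩ Xset i) from (Finset.sdiff_inter_self_right _ _).symm,
        Finset.card_sdiff_of_subset Finset.inter_subset_right, card_Xset]
    have hvB : vOth ε (S ∩ Xset (i+1)) ≤ 5 + ε := vOth_le_top hε0 hε1 _
    have hvC : vOth ε (Xset i \ S) ≤ 5 + ε := vOth_le_top hε0 hε1 _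
    have hval : val ε i S = max (vOwn (S ∩ Xset i)) (vOth ε (S ∩ Xset (i+1))) := rfl
    rcases Nat.lt_or_ge (S ∩ Xset i).card 3 with hklt | hkge
    · -- card ≤ 2 : direct utility bound
      have hvA : vOwn (S ∩ Xset i) ≤ 6 := vOwn_le6 (by omega)
      rw [hval, sub_le_iff_le_add]
      apply max_le
      · interval_cases h : (S ∩ Xset i).card
        · rw [vOwn_c0 h]
          have := vOth_nonneg hε0 (Xset i \ S)
          linarith
        · rw [vOth_c2 (by omega : (Xset i \ S).card = 2)]
          linarith
        · rw [vOth_c1 (by omega : (Xset i \ S).card = 1)]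
          linarith
      · have := vOth_nonneg hε0 (Xset i \ S)
        linarith
    · -- card = 3 : impossible by the XOS deviation argument
      exfalso
      have hkeq : (S ∩ Xset i).card = 3 := le_antisymm hk3 hkge
      have hinter : S ∩ Xset i = Xset i :=
        Finset.eq_of_subset_of_card_le Finset.inter_subset_right (by rw [hkeq, card_Xset])
      have hXS : Xset i ⊆ S := by
        intro j hj
        have : j ∈ S ∩ Xset i := hinter.symm ▸ hj
        exact (Finset.mem_inter.mp this).1
      -- specialize the maximization to arbitrary bundles
      have hne : ∀ i : Fin 2, ¬ i + 1 = i := by decide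
      have hmaxT : ∀ T : Finset (Fin 6), c T + vOth ε ((Finset.univ \ T) ∩ Xset i) ≤ c S := by
        intro T
        have hp1 : part2 (fun j => if j ∈ T then i else i+1) i = T := by
          ext j
          simp only [part2, Finset.mem_filter, Finset.mem_univ, true_and]
          split_ifs with h
          · simp [h]
          · simp only [h, iff_false]
            exact hne i
        have hp2 : part2 (fun j => if j ∈ T then i else i+1) (i+1) = Finset.univ \ T := by
          rw [hcompl', hp1]
        have := hmax (fun j => if j ∈ T then i else i+1)
        rw [hp1, hp2, hbid, hbid, hcompl, hsd] at this
        have hempty : Xset i \ S = ∅ := Finset.sdiff_eq_empty_iff_subset.mpr hXS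
        rw [hempty, vOth_c0 Finset.card_empty, add_zero] at this
        exact this
      obtain ⟨A, hA, hpos, hsup⟩ := hXOS
      obtain ⟨a, haA, ha⟩ := Finset.exists_mem_eq_sup' hA (fun a => ∑ j ∈ S, a j)
      have hcS : c S = ∑ j ∈ S, a j := by rw [hsup S, ha]
      have key1 : ∀ j ∈ Xset i, 3 + 3*ε ≤ a j := by
        intro j hj
        have hjS : j ∈ S := hXS hj
        have h2 : (Finset.univ \ (S \ {j})) ∩ Xset i = {j} := by
          apply Finset.Subset.antisymm
          · intro m hm
            rw [Finset.mem_inter, Finset.mem_sdiff] at hm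
            obtain ⟨⟨-, hm2⟩, hmX⟩ := hm
            rw [Finset.mem_sdiff] at hm2
            rw [Finset.mem_singleton]
            by_contra hne'
            exact hm2 ⟨hXS hmX, by simp [hne']⟩
          · intro m hm
            rw [Finset.mem_singleton] at hm
            subst hm
            rw [Finset.mem_inter, Finset.mem_sdiff, Finset.mem_sdiff]
            exact ⟨⟨Finset.mem_univ _, fun hc => hc.2 (Finset.mem_singleton_self _)⟩, hj⟩
        have h1 := hmaxT (S \ {j})
        rw [h2, vOth_c1 (Finset.card_singleton j)] at h1
        have h3 : ∑ m ∈ S \ {j}, a m ≤ c (S \ {j}) := by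
          rw [hsup (S \ {j})]
          exact Finset.le_sup' _ haA
        have h4 : a j + ∑ m ∈ S \ {j}, a m = ∑ m ∈ S, a m := by
          rw [← Finset.erase_eq]
          exact Finset.add_sum_erase S a hjS
        rw [hcS] at h1
        linarith
      have key2 : ∀ j ∈ Xset i, ∑ m ∈ Xset i \ {j}, a m ≤ 6 := by
        intro j hj
        have hcard2 : (Xset i \ {j}).card = 2 := by
          rw [Finset.card_sdiff_of_subset (Finset.singleton_subset_iff.mpr hj), card_Xset,
            Finset.card_singleton]
        have hvv : val ε i (Xset i \ {j}) = 6 := by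
          have e1 : (Xset i \ {j}) ∩ Xset i = Xset i \ {j} :=
            Finset.inter_eq_left.mpr (Finset.sdiff_subset.trans (le_refl _))
          have e2 : (Xset i \ {j}) ∩ Xset (i+1) = ∅ := by
            apply Finset.subset_empty.mp
            rw [← hdisj i]
            exact Finset.inter_subset_inter_right Finset.sdiff_subset |>.trans (le_refl _)
          show max (vOwn ((Xset i \ {j}) ∩ Xset i)) (vOth ε ((Xset i \ {j}) ∩ Xset (i+1))) = 6
          rw [e1, e2, vOwn_c2 hcard2, vOth_c0 Finset.card_empty]
          exact max_eq_left (by linarith)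
        have h5 : ∑ m ∈ Xset i \ {j}, a m ≤ c (Xset i \ {j}) := by
          rw [hsup (Xset i \ {j})]
          exact Finset.le_sup' _ haA
        calc ∑ m ∈ Xset i \ {j}, a m ≤ c (Xset i \ {j}) := h5
          _ ≤ val ε i (Xset i \ {j}) := hcons _
          _ = 6 := hvv
      -- explicit contradiction
      have hi : i = 0 ∨ i = 1 := by fin_cases i <;> simp
      rcases hi with rfl | rfl
      · have k0 := key1 0 (by decide)
        have k1 := key1 1 (by decide)
        have k2 := key2 2 (by decide)
        rw [show Xset 0 \ {2} = ({0, 1} : Finset (Fin 6)) by decide,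
          Finset.sum_pair (by decide : (0 : Fin 6) ≠ 1)] at k2
        linarith
      · have k0 := key1 3 (by decide)
        have k1 := key1 4 (by decide)
        have k2 := key2 5 (by decide)
        rw [show Xset 1 \ {5} = ({3, 4} : Finset (Fin 6)) by decide,
          Finset.sum_pair (by decide : (3 : Fin 6) ≠ 4)] at k2
        linarith
  · -- the PoA bound
    rw [le_div_iff₀ (by linarith : (0:ℝ) < 10 + 2*ε)]
    nlinarith [mul_pos hδ hεpos]
end

section
/- Every normalized monotone subadditive set function on m items is ⌈log₂ m⌉-fractionally subadditive (for m ≥ 2): for every T ⊆ M there exists an additive function a with Σ_{j∈T} a(j) ≥ v(T)/⌈log₂ m⌉ and Σ_{j∈S} a(j) ≤ v(S) for all S ⊆ T. -/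
namespace FracSubadd
open Finset



/-- Harmonic number `H n = ∑_{i=1}^n 1/i`. -/
noncomputable def harmSum (n : ℕ) : ℝ := ∑ i ∈ Finset.range n, ((i:ℝ)+1)⁻¹

lemma harmSum_nonneg (n : ℕ) : 0 ≤ harmSum n := by
  apply Finset.sum_nonneg; intro i _; positivity

lemma harmSum_mono {a b : ℕ} (h : a ≤ b) : harmSum a ≤ harmSum b := by
  apply Finset.sum_le_sum_of_subset_of_nonneg (Finset.range_subset_range.2 h)
  intro i _ _; positivity

lemma harmSum_gap {c' c : ℕ} (h : c' ≤ c) (hc : 0 < c) :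
    ((c : ℝ) - c') / c ≤ harmSum c - harmSum c' := by
  have hsplit : harmSum c' + ∑ i ∈ Finset.Ico c' c, ((i:ℝ)+1)⁻¹ = harmSum c := by
    rw [harmSum, harmSum, Finset.range_eq_Ico, Finset.range_eq_Ico]
    exact Finset.sum_Ico_consecutive (fun i : ℕ => ((i:ℝ)+1)⁻¹) (Nat.zero_le _) h
  have hbound : ∑ i ∈ Finset.Ico c' c, ((c:ℝ))⁻¹ ≤ ∑ i ∈ Finset.Ico c' c, ((i:ℝ)+1)⁻¹ := by
    apply Finset.sum_le_sum
    intro i hi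
    have hi2 := (Finset.mem_Ico.1 hi).2
    have h1 : (i:ℝ) + 1 ≤ c := by exact_mod_cast hi2
    have h2 : (0:ℝ) < (i:ℝ) + 1 := by positivity
    exact inv_anti₀ h2 h1
  have hcard : ∑ i ∈ Finset.Ico c' c, ((c:ℝ))⁻¹ = ((c:ℝ) - c') * (c:ℝ)⁻¹ := by
    rw [Finset.sum_const, Nat.card_Ico, nsmul_eq_mul, Nat.cast_sub h]
  have hcR : (0:ℝ) < c := by exact_mod_cast hc
  have heq : ((c:ℝ) - c') * (c:ℝ)⁻¹ = ((c:ℝ) - c')/c := by ring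
  linarith [hsplit, hbound, hcard]

lemma harmSum_pow_le : ∀ t : ℕ, 3 ≤ t → harmSum (2^t) ≤ (t : ℝ) := by
  intro t ht
  induction t with
  | zero => omega
  | succ t ih =>
    rcases Nat.lt_or_ge t 3 with h3 | h3
    · interval_cases t
      · omega
      · omega
      · norm_num [harmSum, Finset.sum_range_succ]
    · have ihh := ih h3
      have hle : (2:ℕ)^t ≤ 2^(t+1) := Nat.pow_le_pow_right (by norm_num) (Nat.le_succ t)
      have hsplit : harmSum (2^t) + ∑ i ∈ Finset.Ico (2^t : ℕ) (2^(t+1)), ((i:ℝ)+1)⁻¹ = harmSum (2^(t+1)) := by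
        rw [harmSum, harmSum, Finset.range_eq_Ico, Finset.range_eq_Ico]
        exact Finset.sum_Ico_consecutive (fun i : ℕ => ((i:ℝ)+1)⁻¹) (Nat.zero_le _) hle
      have hterm : ∑ i ∈ Finset.Ico (2^t : ℕ) (2^(t+1)), ((i:ℝ)+1)⁻¹ ≤
          ∑ i ∈ Finset.Ico (2^t : ℕ) (2^(t+1)), (((2:ℕ)^t : ℝ))⁻¹ := by
        apply Finset.sum_le_sum
        intro i hi
        have hi1 := (Finset.mem_Ico.1 hi).1
        have h1 : ((2:ℕ)^t : ℝ) ≤ (i:ℝ) + 1 := by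
          have : ((2:ℕ)^t : ℝ) ≤ (i:ℝ) := by exact_mod_cast hi1
          linarith
        have h2 : (0:ℝ) < ((2:ℕ)^t : ℝ) := by positivity
        exact inv_anti₀ h2 h1
      have hcard : ∑ i ∈ Finset.Ico (2^t : ℕ) (2^(t+1)), (((2:ℕ)^t : ℝ))⁻¹ = 1 := by
        rw [Finset.sum_const, Nat.card_Ico, nsmul_eq_mul]
        have h2 : (2:ℕ)^(t+1) - 2^t = 2^t := by
          have : (2:ℕ)^(t+1) = 2^t * 2 := by rw [pow_succ]
          omega
        rw [h2]
        have hne : (((2:ℕ)^t : ℝ)) ≠ 0 := by positivity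
        field_simp
        norm_cast
      push_cast
      push_cast at hsplit hterm hcard ihh
      linarith

lemma greedy_exists {ι : Type*} [DecidableEq ι]
    (v : Finset ι → ℝ) (hnn : ∀ S, 0 ≤ v S) (hnorm : v ∅ = 0)
    (hmono : ∀ S T : Finset ι, S ⊆ T → v S ≤ v T)
    (hsub : ∀ S T : Finset ι, v (S ∪ T) ≤ v S + v T) :
    ∀ R : Finset ι, ∃ a : ι → ℝ,
      (∀ j, j ∉ R → a j = 0) ∧ (v R ≤ ∑ j ∈ R, a j) ∧
      (∀ C : Finset ι, ∑ j ∈ C ∩ R, a j ≤ harmSum (C ∩ R).card * v (C ∩ R)) := by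
  intro R
  induction R using Finset.strongInduction with
  | _ R ih =>
    rcases R.eq_empty_or_nonempty with rfl | hR
    · refine ⟨0, fun j _ => rfl, by simp [hnorm], fun C => ?_⟩
      simp [hnorm]
    · have hcand : (R.powerset.filter fun S => S.Nonempty).Nonempty :=
        ⟨R, by simp [hR]⟩
      obtain ⟨B, hBmem, hBmin⟩ :=
        Finset.exists_min_image _ (fun S => v S / (S.card : ℝ)) hcand
      rw [Finset.mem_filter, Finset.mem_powerset] at hBmem
      obtain ⟨hBR, hBne⟩ := hBmem
      have hmin : ∀ S : Finset ι, S ⊆ R → S.Nonempty →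
          v B / (B.card : ℝ) ≤ v S / (S.card : ℝ) := fun S hSR hSne =>
        hBmin S (Finset.mem_filter.2 ⟨Finset.mem_powerset.2 hSR, hSne⟩)
      set ρ : ℝ := v B / (B.card : ℝ) with hρ
      have hBcard : (0:ℝ) < (B.card : ℝ) := by
        exact_mod_cast Finset.card_pos.2 hBne
      have hssub : R \ B ⊂ R := Finset.sdiff_ssubset hBR hBne
      obtain ⟨a', h0', hval', hfeas'⟩ := ih _ hssub
      have hunion : B ∪ (R \ B) = R := Finset.union_sdiff_of_subset hBR
      refine ⟨fun j => if j ∈ B then ρ else a' j, ?_, ?_, ?_⟩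
      · intro j hj
        have hjB : j ∉ B := fun h => hj (hBR h)
        have hjRB : j ∉ R \ B := fun h => hj (Finset.mem_sdiff.1 h).1
        simp [hjB, h0' j hjRB]
      · -- value
        have hsplit := Finset.sum_sdiff (f := fun j => if j ∈ B then ρ else a' j) hBR
        have hB : ∑ j ∈ B, (if j ∈ B then ρ else a' j) = (B.card : ℝ) * ρ := by
          rw [Finset.sum_congr rfl (fun j hj => if_pos hj), Finset.sum_const, nsmul_eq_mul]
        have hRB : ∑ j ∈ R \ B, (if j ∈ B then ρ else a' j) = ∑ j ∈ R \ B, a' j := by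
          apply Finset.sum_congr rfl
          intro j hj
          exact if_neg (Finset.mem_sdiff.1 hj).2
        have hBval : (B.card : ℝ) * ρ = v B := by
          rw [hρ, mul_comm, div_mul_cancel₀ _ (ne_of_gt hBcard)]
        have hsubR : v R ≤ v B + v (R \ B) := by
          calc v R = v (B ∪ (R \ B)) := by rw [hunion]
          _ ≤ v B + v (R \ B) := hsub _ _
        rw [← hsplit, hRB, hB, hBval]
        linarith [hval']
      · -- feasibility
        intro C
        have hCBsub : C ∩ B ⊆ C ∩ R := Finset.inter_subset_inter (le_refl C) hBR
        have hset : (C ∩ R) \ (C ∩ B) = C ∩ (R \ B) := by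
          ext j; simp only [Finset.mem_sdiff, Finset.mem_inter]; tauto
        have hsplit := Finset.sum_sdiff (f := fun j => if j ∈ B then ρ else a' j) hCBsub
        have hB : ∑ j ∈ C ∩ B, (if j ∈ B then ρ else a' j) = ((C ∩ B).card : ℝ) * ρ := by
          rw [Finset.sum_congr rfl (fun j hj => if_pos (Finset.mem_inter.1 hj).2),
            Finset.sum_const, nsmul_eq_mul]
        have hRB : ∑ j ∈ (C ∩ R) \ (C ∩ B), (if j ∈ B then ρ else a' j)
            = ∑ j ∈ C ∩ (R \ B), a' j := by
          rw [hset]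
          apply Finset.sum_congr rfl
          intro j hj
          exact if_neg (Finset.mem_sdiff.1 (Finset.mem_inter.1 hj).2).2
        set b := (C ∩ B).card with hbdef
        set c := (C ∩ R).card with hcdef
        set c' := (C ∩ (R \ B)).card with hc'def
        have hcc : c' + b = c := by
          rw [hc'def, hbdef, hcdef, ← hset, Finset.card_sdiff_of_subset hCBsub]
          have := Finset.card_le_card hCBsub
          omega
        have hIH := hfeas' C
        have hvmono : v (C ∩ (R \ B)) ≤ v (C ∩ R) := by
          apply hmono
          exact Finset.inter_subset_inter (le_refl C) (Finset.sdiff_subset)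
        have hIH2 : ∑ j ∈ C ∩ (R \ B), a' j ≤ harmSum c' * v (C ∩ R) := by
          calc ∑ j ∈ C ∩ (R \ B), a' j ≤ harmSum c' * v (C ∩ (R \ B)) := hIH
          _ ≤ harmSum c' * v (C ∩ R) :=
            mul_le_mul_of_nonneg_left hvmono (harmSum_nonneg c')
        rw [← hsplit, hRB, hB]
        rcases Nat.eq_zero_or_pos b with hb0 | hbpos
        · -- C ∩ B empty
          rw [hb0]
          have : harmSum c' * v (C ∩ R) ≤ harmSum c * v (C ∩ R) :=
            mul_le_mul_of_nonneg_right (harmSum_mono (by omega)) (hnn _)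
          push_cast
          linarith [hIH2]
        · -- C ∩ B nonempty, hence C ∩ R nonempty
          have hCRne : (C ∩ R).Nonempty := by
            have : (C ∩ B).Nonempty := Finset.card_pos.1 hbpos
            exact this.mono hCBsub
          have hcpos : 0 < c := Finset.card_pos.2 hCRne
          have hcR : (0:ℝ) < (c:ℝ) := by exact_mod_cast hcpos
          have hρle : ρ ≤ v (C ∩ R) / (c : ℝ) :=
            hmin _ (Finset.inter_subset_right) hCRne
          have hbρ : (b:ℝ) * ρ ≤ (b:ℝ) * (v (C ∩ R) / c) :=
            mul_le_mul_of_nonneg_left hρle (by positivity)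
          have hgap : ((c:ℝ) - c') / c ≤ harmSum c - harmSum c' :=
            harmSum_gap (by omega) hcpos
          have hbcast : (b:ℝ) = (c:ℝ) - (c':ℝ) := by
            have : (c':ℝ) + (b:ℝ) = (c:ℝ) := by exact_mod_cast hcc
            linarith
          have hkey : (b:ℝ) * (v (C ∩ R) / c) + harmSum c' * v (C ∩ R)
              ≤ harmSum c * v (C ∩ R) := by
            have h1 : (b:ℝ) * (v (C ∩ R) / c) = ((b:ℝ)/c) * v (C ∩ R) := by ring
            have h2 : ((b:ℝ)/c) ≤ harmSum c - harmSum c' := by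
              rw [hbcast]; exact hgap
            have h3 : ((b:ℝ)/c) * v (C ∩ R) ≤ (harmSum c - harmSum c') * v (C ∩ R) :=
              mul_le_mul_of_nonneg_right h2 (hnn _)
            rw [h1]; nlinarith [h3]
          linarith [hIH2, hbρ, hkey]

lemma pair_sol {ι : Type*} [DecidableEq ι]
    (v : Finset ι → ℝ) (hnn : ∀ S, 0 ≤ v S) (hnorm : v ∅ = 0)
    (hmono : ∀ S T : Finset ι, S ⊆ T → v S ≤ v T)
    (hsub : ∀ S T : Finset ι, v (S ∪ T) ≤ v S + v T)
    (P : Finset ι) (hP : P.card ≤ 2) :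
    ∃ a : ι → ℝ, (∀ j, j ∉ P → a j = 0) ∧ (∑ j ∈ P, a j = v P) ∧
      (∀ S : Finset ι, ∑ j ∈ S, a j ≤ v S) := by
  interval_cases h : P.card
  · -- card 0
    rw [Finset.card_eq_zero] at h
    subst h
    exact ⟨0, fun j _ => rfl, by simp [hnorm], fun S => by simpa using hnn S⟩
  · -- card 1
    rw [Finset.card_eq_one] at h
    obtain ⟨x, rfl⟩ := h
    refine ⟨fun j => if j = x then v {x} else 0, ?_, ?_, ?_⟩
    · intro j hj
      simp only [Finset.mem_singleton] at hj
      simp [hj]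
    · simp
    · intro S
      rw [Finset.sum_ite_eq' S x (fun _ => v {x})]
      by_cases hx : x ∈ S
      · simp only [hx, if_true]
        exact hmono _ _ (Finset.singleton_subset_iff.2 hx)
      · simp [hx, hnn S]
  · -- card 2
    rw [Finset.card_eq_two] at h
    obtain ⟨x, y, hxy, rfl⟩ := h
    refine ⟨fun j => (if j = x then v {x} else 0) + (if j = y then v {x, y} - v {x} else 0),
      ?_, ?_, ?_⟩
    · intro j hj
      simp only [Finset.mem_insert, Finset.mem_singleton] at hj
      push_neg at hj
      simp [hj.1, hj.2]
    · rw [Finset.sum_pair hxy]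
      simp [hxy, hxy.symm]
    · intro S
      rw [Finset.sum_add_distrib, Finset.sum_ite_eq' S x (fun _ => v {x}),
        Finset.sum_ite_eq' S y (fun _ => v {x, y} - v {x})]
      have hsub2 : v {x, y} ≤ v {x} + v {y} := by
        have : ({x} : Finset ι) ∪ {y} = {x, y} := by
          ext j; simp [or_comm]
        rw [← this]
        exact hsub _ _
      by_cases hx : x ∈ S <;> by_cases hy : y ∈ S
      · simp only [hx, hy, if_true]
        have : ({x, y} : Finset ι) ⊆ S := by
          rw [Finset.insert_subset_iff, Finset.singleton_subset_iff]
          exact ⟨hx, hy⟩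
        have := hmono _ _ this
        linarith
      · simp only [hx, hy, if_true, if_false]
        have := hmono {x} S (Finset.singleton_subset_iff.2 hx)
        linarith
      · simp only [hx, hy, if_true, if_false]
        have := hmono {y} S (Finset.singleton_subset_iff.2 hy)
        linarith
      · simp [hx, hy, hnn S]

end FracSubadd

open FracSubadd Finset in
/-- Every normalized monotone subadditive set function on `m ≥ 2`
items is `⌈log₂ m⌉`-fractionally subadditive: for every `T` there is an additive
minorant on subsets of `T` capturing at least a `1/⌈log₂ m⌉` fraction of `v T`. -/
theorem subadditive_is_log_fractionally_subadditive {ι : Type*} [Fintype ι]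
    [DecidableEq ι] (hm : 2 ≤ Fintype.card ι)
    (v : Finset ι → ℝ)
    (hnn : ∀ S, 0 ≤ v S)
    (hnorm : v ∅ = 0)
    (hmono : ∀ S T : Finset ι, S ⊆ T → v S ≤ v T)
    (hsub : ∀ S T : Finset ι, v (S ∪ T) ≤ v S + v T) :
    ∀ T : Finset ι, ∃ a : ι → ℝ,
      v T / (Nat.clog 2 (Fintype.card ι) : ℝ) ≤ ∑ j ∈ T, a j ∧
      ∀ S ⊆ T, ∑ j ∈ S, a j ≤ v S := by
  intro T
  have hkpos : 0 < Nat.clog 2 (Fintype.card ι) := Nat.clog_pos (by norm_num) hm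
  have hTm : T.card ≤ Fintype.card ι := by
    simpa using Finset.card_le_univ T
  by_cases hbig : 5 ≤ Fintype.card ι
  · -- greedy branch
    obtain ⟨a, h0, hval, hfeas⟩ := greedy_exists v hnn hnorm hmono hsub T
    set k := Nat.clog 2 (Fintype.card ι) with hk
    have hk3 : 3 ≤ k := by
      have h2 : (2:ℕ)^2 < Fintype.card ι := by omega
      have := (Nat.lt_clog_iff_pow_lt (by norm_num : 1 < 2)).2 h2
      omega
    have hkR : (0:ℝ) < (k:ℝ) := by exact_mod_cast hkpos
    have hharm : harmSum (Fintype.card ι) ≤ (k:ℝ) := by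
      calc harmSum (Fintype.card ι) ≤ harmSum (2^k) :=
            harmSum_mono (Nat.le_pow_clog (by norm_num) _)
      _ ≤ (k:ℝ) := harmSum_pow_le k hk3
    refine ⟨fun j => a j / (k:ℝ), ?_, ?_⟩
    · rw [← Finset.sum_div]
      gcongr
    · intro S hS
      rw [← Finset.sum_div, div_le_iff₀ hkR]
      have h1 : ∑ j ∈ S, a j ≤ harmSum S.card * v S := by
        have := hfeas S
        rwa [Finset.inter_eq_left.mpr hS] at this
      have h2 : harmSum S.card * v S ≤ (k:ℝ) * v S := by
        apply mul_le_mul_of_nonneg_right _ (hnn S)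
        calc harmSum S.card ≤ harmSum (Fintype.card ι) :=
              harmSum_mono (by simpa using Finset.card_le_univ S)
        _ ≤ (k:ℝ) := hharm
      linarith
  · -- small branch : Fintype.card ι ≤ 4
    push_neg at hbig
    have hT4 : T.card ≤ 4 := by omega
    by_cases hT2 : T.card ≤ 2
    · obtain ⟨a, h0, hveq, hfeas⟩ := pair_sol v hnn hnorm hmono hsub T hT2
      refine ⟨a, ?_, fun S _ => hfeas S⟩
      rw [hveq]
      apply div_le_self (hnn T)
      exact_mod_cast hkpos
    · -- 3 ≤ T.card ≤ 4, so Fintype.card ι ∈ {3,4} and clog = 2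
      push_neg at hT2
      have hm3 : 3 ≤ Fintype.card ι := by omega
      have hk2 : Nat.clog 2 (Fintype.card ι) = 2 := by
        have hup : Nat.clog 2 (Fintype.card ι) ≤ 2 :=
          (Nat.clog_le_iff_le_pow (by norm_num : 1 < 2)).2 (by norm_num; omega)
        have hlow : 1 < Nat.clog 2 (Fintype.card ι) :=
          (Nat.lt_clog_iff_pow_lt (by norm_num : 1 < 2)).2 (by norm_num; omega)
        omega
      obtain ⟨P₁, hP₁T, hP₁c⟩ := Finset.exists_subset_card_eq (s := T) (n := 2) (by omega)
      have hP₂T : T \ P₁ ⊆ T := Finset.sdiff_subset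
      have hP₂c : (T \ P₁).card ≤ 2 := by
        rw [Finset.card_sdiff_of_subset hP₁T]
        omega
      have hunion : P₁ ∪ (T \ P₁) = T := Finset.union_sdiff_of_subset hP₁T
      have hvT : v T ≤ v P₁ + v (T \ P₁) := by
        calc v T = v (P₁ ∪ (T \ P₁)) := by rw [hunion]
        _ ≤ v P₁ + v (T \ P₁) := hsub _ _
      have hbest : ∃ P ⊆ T, P.card ≤ 2 ∧ v T ≤ 2 * v P := by
        rcases le_total (v P₁) (v (T \ P₁)) with hle | hle
        · exact ⟨T \ P₁, hP₂T, hP₂c, by linarith⟩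
        · exact ⟨P₁, hP₁T, by omega, by linarith⟩
      obtain ⟨P, hPT, hPc, hPval⟩ := hbest
      obtain ⟨a, h0, hveq, hfeas⟩ := pair_sol v hnn hnorm hmono hsub P hPc
      refine ⟨a, ?_, fun S _ => hfeas S⟩
      have hsumT : ∑ j ∈ T, a j = ∑ j ∈ P, a j := by
        symm
        apply Finset.sum_subset hPT
        intro j _ hj
        exact h0 j hj
      rw [hsumT, hveq, hk2]
      rw [div_le_iff₀ (by norm_num : (0:ℝ) < ((2:ℕ):ℝ))]
      push_cast
      linarith
end

section
/- Smoothness of VCG for β-XOS valuations and XOS bids (pointwise relaxed (1/β,1,1)-smoothness): Let v_1,...,v_n be β-fractionally subadditive valuations, let (O_1,...,O_n) be a welfare-optimal partition of M, and let a_i be the additive bid from β-fractional subadditivity applied to O_i. Then for every profile of conservative monotone XOS bids b with efficient VCG allocation (X_1(b),...,X_n(b)): Σ_i u_i((a_i, b_{-i}), v_i) ≥ (1/β)·Σ_i v_i(O_i) - Σ_i p_i(X_i(b), b_{-i}) - Σ_i b_i(X_i(b)). -/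
section Aux

variable {n : ℕ} {ι : Type*} [Fintype ι] [DecidableEq ι]

/-- Any particular assignment's value is a lower bound for `othersWelfare`. -/
lemma othersWelfare_ge (b : Fin n → Finset ι → ℝ) (i : Fin n) (T : Finset ι)
    (g : ι → Fin n) :
    ∑ k ∈ Finset.univ.erase i, b k (T.filter (fun j => g j = k)) ≤
      othersWelfare b i T :=
  Finset.le_sup'
    (fun g : ι → Fin n => ∑ k ∈ Finset.univ.erase i, b k (T.filter (fun j => g j = k)))
    (Finset.mem_univ g)

/-- `othersWelfare` is attained by some assignment. -/
lemma othersWelfare_exists (b : Fin n → Finset ι → ℝ) (i : Fin n) (T : Finset ι) :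
    ∃ g : ι → Fin n, othersWelfare b i T =
      ∑ k ∈ Finset.univ.erase i, b k (T.filter (fun j => g j = k)) := by
  obtain ⟨g, -, hg⟩ := Finset.exists_mem_eq_sup'
    (Finset.univ_nonempty_iff.mpr ⟨fun _ => i⟩)
    (fun g : ι → Fin n => ∑ k ∈ Finset.univ.erase i, b k (T.filter (fun j => g j = k)))
  exact ⟨g, hg⟩

end Aux

/-- Pointwise relaxed `(1/β, 1, 1)`-smoothness of VCG for
β-fractionally subadditive valuations and conservative monotone XOS bids.
`o` encodes a welfare-optimal allocation `(O_1,…,O_n)`, `a i` is the additive bid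
from β-fractional subadditivity applied to `O_i` (supported on `O_i`), `x` encodes
the efficient VCG allocation for the bids `b`, and `y i` encodes an efficient
allocation for the deviation profile `(a_i, b_{-i})`. Then
`Σ_i u_i((a_i,b_{-i}),v_i) ≥ (1/β)·Σ_i v_i(O_i) - Σ_i p_i(X_i(b),b_{-i}) - Σ_i b_i(X_i(b))`. -/
theorem vcg_pointwise_smooth {n : ℕ} {ι : Type*} [Fintype ι] [DecidableEq ι]
    (hn : 2 ≤ n) (β : ℝ) (hβ : 1 ≤ β)
    (v : Fin n → Finset ι → ℝ)
    (hvnn : ∀ i S, 0 ≤ v i S)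
    (hvmono : ∀ i, ∀ S T : Finset ι, S ⊆ T → v i S ≤ v i T)
    (o : ι → Fin n)
    (hopt : ∀ g : ι → Fin n, ∑ i, v i (part g i) ≤ ∑ i, v i (part o i))
    (a : Fin n → ι → ℝ)
    (ha0 : ∀ i, ∀ j ∉ part o i, a i j = 0)
    (ha1 : ∀ i, v i (part o i) / β ≤ ∑ j ∈ part o i, a i j)
    (ha2 : ∀ i, ∀ S ⊆ part o i, ∑ j ∈ S, a i j ≤ v i S)
    (b : Fin n → Finset ι → ℝ)
    (hXOS : ∀ i, IsXOS (b i))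
    (hmono : ∀ i, ∀ S T : Finset ι, S ⊆ T → b i S ≤ b i T)
    (hcons : ∀ i S, b i S ≤ v i S)
    (hbnn : ∀ i S, 0 ≤ b i S)
    (x : ι → Fin n)
    (hx : ∀ g : ι → Fin n, ∑ i, b i (part g i) ≤ ∑ i, b i (part x i))
    (y : Fin n → ι → Fin n)
    (hy : ∀ i, ∀ g : ι → Fin n,
      (∑ j ∈ part g i, a i j) + ∑ k ∈ Finset.univ.erase i, b k (part g k) ≤
        (∑ j ∈ part (y i) i, a i j) +
          ∑ k ∈ Finset.univ.erase i, b k (part (y i) k)) :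
    (1 / β) * (∑ i, v i (part o i)) - (∑ i, vcgPrice b i (part x i)) -
        (∑ i, b i (part x i)) ≤
      ∑ i, (v i (part (y i) i) - vcgPrice b i (part (y i) i)) := by
  classical
  have hβ0 : (0:ℝ) < β := lt_of_lt_of_le one_pos hβ
  -- Deviation lemma, per agent.
  have dev : ∀ i : Fin n,
      (∑ j ∈ part o i, a i j) - vcgPrice b i (part o i) ≤
        v i (part (y i) i) - vcgPrice b i (part (y i) i) := by
    intro i
    obtain ⟨g, hg⟩ := othersWelfare_exists b i (Finset.univ \ part o i)
    have h1 : ∑ j ∈ part o i, a i j =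
        ∑ j ∈ part (fun j => if o j = i then i else g j) i, a i j := by
      refine Finset.sum_subset ?_ ?_
      · intro j hj
        simp only [part, Finset.mem_filter, Finset.mem_univ, true_and] at hj ⊢
        simp [hj]
      · intro j _ hjo
        exact ha0 i j hjo
    have h2 : ∑ k ∈ Finset.univ.erase i, b k (part (fun j => if o j = i then i else g j) k) =
        ∑ k ∈ Finset.univ.erase i,
          b k ((Finset.univ \ part o i).filter (fun j => g j = k)) := by
      refine Finset.sum_congr rfl ?_
      intro k hk
      have hki : k ≠ i := (Finset.mem_erase.mp hk).1
      congr 1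
      ext j
      simp only [part, Finset.mem_filter, Finset.mem_univ, true_and, Finset.mem_sdiff]
      by_cases hj : o j = i
      · simp [hj, hki.symm]
      · simp [hj]
    have h3 := hy i (fun j => if o j = i then i else g j)
    rw [← h1, h2, ← hg] at h3
    have h4 : ∑ k ∈ Finset.univ.erase i, b k (part (y i) k) ≤
        othersWelfare b i (Finset.univ \ part (y i) i) := by
      refine le_trans (le_of_eq ?_) (othersWelfare_ge b i _ (y i))
      refine Finset.sum_congr rfl ?_
      intro k hk
      have hki : k ≠ i := (Finset.mem_erase.mp hk).1
      congr 1
      ext j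
      simp only [part, Finset.mem_filter, Finset.mem_univ, true_and, Finset.mem_sdiff]
      constructor
      · intro hjk
        refine ⟨?_, hjk⟩
        rw [hjk]
        exact hki
      · exact fun h => h.2
    have h5 : ∑ j ∈ part (y i) i, a i j ≤ v i (part (y i) i) := by
      have heq : ∑ j ∈ part (y i) i, a i j =
          ∑ j ∈ part (y i) i ∩ part o i, a i j := by
        refine (Finset.sum_subset Finset.inter_subset_left ?_).symm
        intro j hj hj'
        refine ha0 i j ?_
        intro hjo
        exact hj' (Finset.mem_inter.mpr ⟨hj, hjo⟩)
      rw [heq]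
      exact le_trans (ha2 i _ Finset.inter_subset_right)
        (hvmono i _ _ Finset.inter_subset_left)
    simp only [vcgPrice]
    linarith
  -- Claim A: othersWelfare on univ \ X_i plus b_i(X_i) is at most total welfare of x
  have claimA : ∀ i : Fin n,
      othersWelfare b i (Finset.univ \ part x i) + b i (part x i) ≤
        ∑ k, b k (part x k) := by
    intro i
    obtain ⟨g, hg⟩ := othersWelfare_exists b i (Finset.univ \ part x i)
    have hsub : part x i ⊆ part (fun j => if x j = i then i else g j) i := by
      intro j hj
      simp only [part, Finset.mem_filter, Finset.mem_univ, true_and] at hj ⊢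
      simp [hj]
    have h2 : ∑ k ∈ Finset.univ.erase i, b k (part (fun j => if x j = i then i else g j) k) =
        ∑ k ∈ Finset.univ.erase i,
          b k ((Finset.univ \ part x i).filter (fun j => g j = k)) := by
      refine Finset.sum_congr rfl ?_
      intro k hk
      have hki : k ≠ i := (Finset.mem_erase.mp hk).1
      congr 1
      ext j
      simp only [part, Finset.mem_filter, Finset.mem_univ, true_and, Finset.mem_sdiff]
      by_cases hj : x j = i
      · simp [hj, hki.symm]
      · simp [hj]
    have h3 := hx (fun j => if x j = i then i else g j)
    have hsplit : ∑ k ∈ Finset.univ.erase i,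
          b k (part (fun j => if x j = i then i else g j) k) +
          b i (part (fun j => if x j = i then i else g j) i) =
        ∑ k, b k (part (fun j => if x j = i then i else g j) k) :=
      Finset.sum_erase_add _ _ (Finset.mem_univ i)
    rw [← hsplit, h2, ← hg] at h3
    have h4 : b i (part x i) ≤ b i (part (fun j => if x j = i then i else g j) i) :=
      hmono i _ _ hsub
    linarith
  -- XOS clauses at the bundles X_k
  have hclause : ∀ k : Fin n, ∃ w : ι → ℝ, (∀ j, 0 ≤ w j) ∧
      (∑ j ∈ part x k, w j = b k (part x k)) ∧ ∀ S, ∑ j ∈ S, w j ≤ b k S := by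
    intro k
    obtain ⟨A, hA, hnn, hsup⟩ := hXOS k
    obtain ⟨w, hwA, hweq⟩ := Finset.exists_mem_eq_sup' hA
      (fun a => ∑ j ∈ part x k, a j)
    refine ⟨w, hnn w hwA, ?_, ?_⟩
    · rw [hsup (part x k), hweq]
    · intro S
      rw [hsup S]
      exact Finset.le_sup' (fun a => ∑ j ∈ S, a j) hwA
  choose w hw0 hwX hwle using hclause
  -- Fact 3: others can realize the bundles X_k \ O_i within univ \ O_i
  have fact3 : ∀ i : Fin n,
      ∑ k ∈ Finset.univ.erase i, b k (part x k \ part o i) ≤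
        othersWelfare b i (Finset.univ \ part o i) := by
    intro i
    have hcard : 1 < Fintype.card (Fin n) := by rw [Fintype.card_fin]; omega
    obtain ⟨k₀, hk₀⟩ := Fintype.exists_ne_of_one_lt_card hcard i
    set g : ι → Fin n := fun j => if x j = i then k₀ else x j with hgdef
    refine le_trans ?_ (othersWelfare_ge b i _ g)
    refine Finset.sum_le_sum ?_
    intro k hk
    have hki : k ≠ i := (Finset.mem_erase.mp hk).1
    refine hmono k _ _ ?_
    intro j hj
    simp only [part, Finset.mem_sdiff, Finset.mem_filter, Finset.mem_univ, true_and] at hj ⊢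
    obtain ⟨hjk, hjo⟩ := hj
    refine ⟨hjo, ?_⟩
    simp only [g]
    rw [if_neg (by rw [hjk]; exact hki)]
    exact hjk
  -- Fact 5: total fractional mass of the optimal bundles inside X is ≤ welfare of x
  have fact5 : ∑ i, ∑ k ∈ Finset.univ.erase i, ∑ j ∈ part x k ∩ part o i, w k j ≤
      ∑ k, b k (part x k) := by
    have step1 : ∑ i, ∑ k ∈ Finset.univ.erase i, ∑ j ∈ part x k ∩ part o i, w k j ≤
        ∑ i, ∑ k, ∑ j ∈ part x k ∩ part o i, w k j := by
      refine Finset.sum_le_sum ?_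
      intro i _
      refine Finset.sum_le_sum_of_subset_of_nonneg (Finset.erase_subset i Finset.univ) ?_
      intro k _ _
      exact Finset.sum_nonneg fun j _ => hw0 k j
    refine le_trans step1 ?_
    rw [Finset.sum_comm]
    refine Finset.sum_le_sum ?_
    intro k _
    have : ∑ i, ∑ j ∈ part x k ∩ part o i, w k j = ∑ j ∈ part x k, w k j := by
      have hre : ∀ i : Fin n, part x k ∩ part o i =
          (part x k).filter (fun j => o j = i) := by
        intro i
        ext j
        simp [part, Finset.mem_inter, Finset.mem_filter, and_assoc]
      calc ∑ i, ∑ j ∈ part x k ∩ part o i, w k j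
          = ∑ i, ∑ j ∈ (part x k).filter (fun j => o j = i), w k j := by
            exact Finset.sum_congr rfl fun i _ => by rw [hre i]
        _ = ∑ j ∈ part x k, w k j := Finset.sum_fiberwise _ _ _
    rw [this, hwX k]
  -- Payment-difference lemma
  have pay : ∑ i, othersWelfare b i (Finset.univ \ part x i) ≤
      ∑ i, othersWelfare b i (Finset.univ \ part o i) + ∑ i, b i (part x i) := by
    have stepA : ∑ i, othersWelfare b i (Finset.univ \ part x i) ≤
        ∑ i, ∑ k ∈ Finset.univ.erase i, b k (part x k) := by
      refine Finset.sum_le_sum ?_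
      intro i _
      have := claimA i
      have hsplit : ∑ k ∈ Finset.univ.erase i, b k (part x k) + b i (part x i) =
          ∑ k, b k (part x k) := Finset.sum_erase_add _ _ (Finset.mem_univ i)
      linarith
    have stepB : ∀ i : Fin n, ∀ k ∈ Finset.univ.erase i,
        b k (part x k) ≤ b k (part x k \ part o i) + ∑ j ∈ part x k ∩ part o i, w k j := by
      intro i k _
      have hdecomp : ∑ j ∈ part x k \ (part x k ∩ part o i), w k j +
          ∑ j ∈ part x k ∩ part o i, w k j = ∑ j ∈ part x k, w k j :=
        Finset.sum_sdiff Finset.inter_subset_left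
      rw [Finset.sdiff_inter_self_left] at hdecomp
      have h1 : ∑ j ∈ part x k \ part o i, w k j ≤ b k (part x k \ part o i) := hwle k _
      have h2 := hwX k
      linarith
    have stepB' : ∑ i, ∑ k ∈ Finset.univ.erase i, b k (part x k) ≤
        ∑ i, (∑ k ∈ Finset.univ.erase i, b k (part x k \ part o i) +
          ∑ k ∈ Finset.univ.erase i, ∑ j ∈ part x k ∩ part o i, w k j) := by
      refine Finset.sum_le_sum ?_
      intro i _
      rw [← Finset.sum_add_distrib]
      exact Finset.sum_le_sum (stepB i)
    have stepC : ∑ i, (∑ k ∈ Finset.univ.erase i, b k (part x k \ part o i) +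
          ∑ k ∈ Finset.univ.erase i, ∑ j ∈ part x k ∩ part o i, w k j) ≤
        ∑ i, othersWelfare b i (Finset.univ \ part o i) + ∑ k, b k (part x k) := by
      rw [Finset.sum_add_distrib]
      exact add_le_add (Finset.sum_le_sum fun i _ => fact3 i) fact5
    calc ∑ i, othersWelfare b i (Finset.univ \ part x i)
        ≤ ∑ i, ∑ k ∈ Finset.univ.erase i, b k (part x k) := stepA
      _ ≤ _ := stepB'
      _ ≤ _ := stepC
  -- Assemble
  have hval : (1 / β) * ∑ i, v i (part o i) ≤ ∑ i, ∑ j ∈ part o i, a i j := by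
    have h := Finset.sum_le_sum (fun i (_ : i ∈ (Finset.univ : Finset (Fin n))) => ha1 i)
    rw [← Finset.sum_div] at h
    rw [one_div, inv_mul_eq_div]
    exact h
  have hdevsum : ∑ i, ((∑ j ∈ part o i, a i j) - vcgPrice b i (part o i)) ≤
      ∑ i, (v i (part (y i) i) - vcgPrice b i (part (y i) i)) :=
    Finset.sum_le_sum fun i _ => dev i
  rw [Finset.sum_sub_distrib] at hdevsum
  have hpay : ∑ i, vcgPrice b i (part o i) ≤
      ∑ i, vcgPrice b i (part x i) + ∑ i, b i (part x i) := by
    simp only [vcgPrice, Finset.sum_sub_distrib]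
    linarith
  linarith
end

section
/- Single-agent deviation bound for additive bids against random prices: Let v : 2^Q → ℝ≥0 be subadditive on a bundle Q, and let 𝒞 be a distribution over additive price vectors p on Q. For each p, let T(p) be a maximal subset of Q with v(T(p)) ≤ p(T(p)) and define the truncated price q_p by q_p(j) = p(j) for j ∈ Q \ T(p) and 0 otherwise; let 𝒟 be the induced distribution on truncated prices. For a bid b and prices p, let X(b,p) = {j ∈ Q : b(j) ≥ p(j)} denote winnings restricted to Q (ties broken in favor of b). Then there exists a bid a in the support of 𝒟 (hence conservative) such that E_{p∼𝒞}[v(X(a,p)) - p(X(a,p))] ≥ v(Q)/2 - E_{p∼𝒞}[p(Q)]. -/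
/-- The truncated price vector: equal to `price p` on `Q \ T p` and zero elsewhere. -/
noncomputable def trunc {ι P : Type*} [DecidableEq ι]
    (Q : Finset ι) (T : P → Finset ι) (price : P → ι → ℝ) (p : P) (j : ι) : ℝ :=
  if j ∈ Q \ T p then price p j else 0

/-- The winnings in `Q` of a bid `a` against item prices `pr` (ties in favor of
the bid). -/
noncomputable def wins {ι : Type*} (Q : Finset ι) (a pr : ι → ℝ) : Finset ι :=
  Q.filter (fun j => pr j ≤ a j)

/-- Single-agent deviation bound for additive bids against random
prices. With `𝒞` a finitely supported distribution over additive price vectors,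
`T p` a maximal subset of `Q` with `v (T p) ≤ price p (T p)`, and truncated prices
as bids, there is a bid `a = trunc p₀` in the support of the induced distribution
`𝒟` with `E_{p∼𝒞}[v(X(a,p)) - p(X(a,p))] ≥ v Q / 2 - E_{p∼𝒞}[p(Q)]`. -/
theorem single_agent_deviation_bound {ι : Type*} [DecidableEq ι]
    (Q : Finset ι) (v : Finset ι → ℝ)
    (hsub : ∀ S T : Finset ι, v (S ∪ T) ≤ v S + v T)
    (hnn : ∀ S, 0 ≤ v S)
    (P : Type*) [Fintype P] (w : P → ℝ)
    (hw : ∀ p, 0 ≤ w p) (hw1 : ∑ p, w p = 1)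
    (price : P → ι → ℝ) (hpr : ∀ p j, 0 ≤ price p j)
    (T : P → Finset ι) (hTQ : ∀ p, T p ⊆ Q)
    (hTle : ∀ p, v (T p) ≤ ∑ j ∈ T p, price p j)
    (hTmax : ∀ p, ∀ T', T p ⊆ T' → T' ⊆ Q →
      v T' ≤ ∑ j ∈ T', price p j → T' = T p) :
    ∃ p₀ : P, 0 < w p₀ ∧
      v Q / 2 - ∑ p, w p * ∑ j ∈ Q, price p j ≤
        ∑ p, w p * (v (wins Q (trunc Q T price p₀) (price p)) -
          ∑ j ∈ wins Q (trunc Q T price p₀) (price p), price p j) := by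
  classical
  set tr : P → ℝ := fun p => ∑ j ∈ Q \ T p, price p j with htr
  set pq : P → ℝ := fun p => ∑ j ∈ Q, price p j with hpq
  set X : P → P → Finset ι := fun q p => wins Q (trunc Q T price q) (price p) with hXdef
  set u : P → P → ℝ := fun q p => v (X q p) - ∑ j ∈ X q p, price p j with hu
  have hXQ : ∀ q p, X q p ⊆ Q := fun q p => Finset.filter_subset _ _
  have htrnn : ∀ q j, 0 ≤ trunc Q T price q j := by
    intro q j
    unfold trunc
    split
    · exact hpr q j
    · exact le_refl 0
  have htrsum : ∀ q, ∑ j ∈ Q, trunc Q T price q j = tr q := by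
    intro q
    rw [htr]
    simp only [trunc, Finset.sum_ite_mem,
      Finset.inter_eq_right.mpr (Finset.sdiff_subset : Q \ T q ⊆ Q)]
  have key : ∀ q p, v (X q p ∪ T p) + tr p - tr q ≤ u q p + pq p := by
    intro q p
    have h1 : v (X q p ∪ T p) ≤ v (X q p) + v (T p) := hsub _ _
    have h2 : v (T p) ≤ ∑ j ∈ T p, price p j := hTle p
    have h3 : ∑ j ∈ X q p, price p j ≤ tr q := by
      calc ∑ j ∈ X q p, price p j ≤ ∑ j ∈ X q p, trunc Q T price q j := by
            refine Finset.sum_le_sum fun j hj => ?_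
            simp only [hXdef, wins, Finset.mem_filter] at hj
            exact hj.2
        _ ≤ ∑ j ∈ Q, trunc Q T price q j :=
            Finset.sum_le_sum_of_subset_of_nonneg (hXQ q p) (fun j _ _ => htrnn q j)
        _ = tr q := htrsum q
    have h4 : tr p + ∑ j ∈ T p, price p j = pq p := by
      rw [htr, hpq]
      exact Finset.sum_sdiff (hTQ p)
    rw [hu]
    dsimp only
    linarith
  have cover : ∀ q p, v Q ≤ v (X q p ∪ T p) + v (X p q ∪ T q) := by
    intro q p
    have hsubQ : (X q p ∪ T p) ∪ (X p q ∪ T q) = Q := by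
      apply Finset.Subset.antisymm
      · exact Finset.union_subset (Finset.union_subset (hXQ q p) (hTQ p))
          (Finset.union_subset (hXQ p q) (hTQ q))
      · intro j hj
        by_cases hp : j ∈ T p
        · exact Finset.mem_union_left _ (Finset.mem_union_right _ hp)
        by_cases hq : j ∈ T q
        · exact Finset.mem_union_right _ (Finset.mem_union_right _ hq)
        rcases le_total (price p j) (price q j) with h | h
        · refine Finset.mem_union_left _ (Finset.mem_union_left _ ?_)
          simp only [hXdef, wins, Finset.mem_filter]
          refine ⟨hj, ?_⟩
          have hmem : j ∈ Q \ T q := Finset.mem_sdiff.mpr ⟨hj, hq⟩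
          simp only [trunc, if_pos hmem]
          exact h
        · refine Finset.mem_union_right _ (Finset.mem_union_left _ ?_)
          simp only [hXdef, wins, Finset.mem_filter]
          refine ⟨hj, ?_⟩
          have hmem : j ∈ Q \ T p := Finset.mem_sdiff.mpr ⟨hj, hp⟩
          simp only [trunc, if_pos hmem]
          exact h
    calc v Q = v ((X q p ∪ T p) ∪ (X p q ∪ T q)) := by rw [hsubQ]
      _ ≤ _ := hsub _ _
  set S : ℝ := ∑ q, ∑ p, w q * w p * v (X q p ∪ T p) with hS
  have hSge : v Q / 2 ≤ S := by
    have hswap : ∑ q, ∑ p, w q * w p * v (X p q ∪ T q) = S := by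
      rw [hS, Finset.sum_comm]
      exact Finset.sum_congr rfl fun q _ => Finset.sum_congr rfl fun p _ => by ring
    have hone : ∑ q : P, ∑ p : P, w q * w p * v Q = v Q := by
      calc ∑ q : P, ∑ p : P, w q * w p * v Q
          = ∑ q : P, w q * ∑ p : P, w p * v Q := by
            refine Finset.sum_congr rfl fun q _ => ?_
            rw [Finset.mul_sum]
            exact Finset.sum_congr rfl fun p _ => by ring
        _ = ∑ q : P, w q * v Q := by rw [← Finset.sum_mul, hw1, one_mul]
        _ = v Q := by rw [← Finset.sum_mul, hw1, one_mul]
    have h2S : v Q ≤ S + S := by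
      calc v Q = ∑ q : P, ∑ p : P, w q * w p * v Q := hone.symm
        _ ≤ ∑ q : P, ∑ p : P, w q * w p * (v (X q p ∪ T p) + v (X p q ∪ T q)) := by
            refine Finset.sum_le_sum fun q _ => Finset.sum_le_sum fun p _ => ?_
            exact mul_le_mul_of_nonneg_left (cover q p) (mul_nonneg (hw q) (hw p))
        _ = S + S := by
            simp only [mul_add, Finset.sum_add_distrib, hswap, ← hS]
    linarith
  have htc : ∑ q : P, ∑ p : P, w q * w p * (tr p - tr q) = 0 := by
    have h1 : ∑ q : P, ∑ p : P, w q * w p * tr p = ∑ p : P, w p * tr p := by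
      calc ∑ q : P, ∑ p : P, w q * w p * tr p
          = ∑ q : P, w q * ∑ p : P, w p * tr p := by
            refine Finset.sum_congr rfl fun q _ => ?_
            rw [Finset.mul_sum]
            exact Finset.sum_congr rfl fun p _ => by ring
        _ = _ := by rw [← Finset.sum_mul, hw1, one_mul]
    have h2 : ∑ q : P, ∑ p : P, w q * w p * tr q = ∑ q : P, w q * tr q := by
      calc ∑ q : P, ∑ p : P, w q * w p * tr q
          = ∑ q : P, (w q * tr q) * ∑ p : P, w p := by
            refine Finset.sum_congr rfl fun q _ => ?_
            rw [Finset.mul_sum]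
            exact Finset.sum_congr rfl fun p _ => by ring
        _ = _ := by
            rw [hw1]
            simp
    simp only [mul_sub, Finset.sum_sub_distrib, h1, h2, sub_self]
  have hmain : v Q / 2 ≤ ∑ q : P, w q * ∑ p : P, w p * (u q p + pq p) := by
    have hexp : ∑ q : P, w q * ∑ p : P, w p * (u q p + pq p)
        = ∑ q : P, ∑ p : P, w q * w p * (u q p + pq p) := by
      refine Finset.sum_congr rfl fun q _ => ?_
      rw [Finset.mul_sum]
      exact Finset.sum_congr rfl fun p _ => by ring
    rw [hexp]
    have hle : ∑ q : P, ∑ p : P, w q * w p * (v (X q p ∪ T p) + (tr p - tr q)) ≤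
        ∑ q : P, ∑ p : P, w q * w p * (u q p + pq p) := by
      refine Finset.sum_le_sum fun q _ => Finset.sum_le_sum fun p _ => ?_
      have := key q p
      exact mul_le_mul_of_nonneg_left (by linarith) (mul_nonneg (hw q) (hw p))
    refine le_trans ?_ hle
    have hsplit : ∑ q : P, ∑ p : P, w q * w p * (v (X q p ∪ T p) + (tr p - tr q))
        = S + ∑ q : P, ∑ p : P, w q * w p * (tr p - tr q) := by
      simp only [mul_add, Finset.sum_add_distrib, hS]
    rw [hsplit, htc, add_zero]
    exact hSge
  have hposq : ∃ q : P, 0 < w q := by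
    by_contra h
    push_neg at h
    have hz : ∑ p, w p = 0 := Finset.sum_eq_zero fun p _ => le_antisymm (h p) (hw p)
    rw [hz] at hw1
    norm_num at hw1
  by_contra hcon
  push_neg at hcon
  have hc : ∀ q, 0 < w q → ∑ p : P, w p * (u q p + pq p) < v Q / 2 := by
    intro q hq
    have h := hcon q hq
    have hsum : ∑ p : P, w p * (u q p + pq p)
        = (∑ p : P, w p * u q p) + ∑ p : P, w p * pq p := by
      simp only [mul_add, Finset.sum_add_distrib]
    have heq : ∑ p : P, w p * u q p
        = ∑ p : P, w p * (v (wins Q (trunc Q T price q) (price p)) -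
            ∑ j ∈ wins Q (trunc Q T price q) (price p), price p j) := by
      simp only [hu, hXdef]
    have hpqe : ∑ p : P, w p * pq p = ∑ p : P, w p * ∑ j ∈ Q, price p j := by
      simp only [hpq]
    rw [hsum, heq, hpqe]
    linarith
  obtain ⟨q₀, hq₀⟩ := hposq
  have hlt : ∑ q : P, w q * ∑ p : P, w p * (u q p + pq p) < v Q / 2 := by
    have hstep : ∑ q : P, w q * ∑ p : P, w p * (u q p + pq p)
        < ∑ q : P, w q * (v Q / 2) := by
      refine Finset.sum_lt_sum (fun i _ => ?_) ⟨q₀, Finset.mem_univ q₀, ?_⟩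
      · rcases (hw i).lt_or_eq with h | h
        · exact le_of_lt (mul_lt_mul_of_pos_left (hc i h) h)
        · rw [← h]; simp
      · exact mul_lt_mul_of_pos_left (hc q₀ hq₀) hq₀
    calc ∑ q : P, w q * ∑ p : P, w p * (u q p + pq p)
        < ∑ q : P, w q * (v Q / 2) := hstep
      _ = v Q / 2 := by rw [← Finset.sum_mul, hw1, one_mul]
  linarith
end
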